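/- arXiv:0902.1571 — 3 statements merged into one kernel-verified Lean document; each statement's English description precedes it below -/
import Mathlib

section
/- Let α ∈ 𝔻 and define the Möbius transformations T_+(z,α)(w) = (w − α)/(−z·conj(α)·w + z) and T_-(z,α)(w) = (z·w − conj(α))/(−z·α·w + 1). Then: (1) if z ∈ ∂𝔻, both T_+(z,α) and T_-(z,α) are holomorphic automorphisms of 𝔻, and in particular γ(T_±(z,α)(w₁), T_±(z,α)(w₂)) = γ(w₁, w₂) for all w₁, w₂ ∈ 𝔻; (2) if z ∈ 𝔻, then T_-(z,α) maps 𝔻 into 𝔻 and γ(T_-(z,α)(w₁), T_-(z,α)(w₂)) ≤ |z|·γ(w₁, w₂) for all w₁, w₂ ∈ 𝔻. -/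
open MeasureTheory Filter Metric Complex Set Topology

noncomputable section

/-- A Schur function: analytic on the open unit disc with modulus bounded by one. -/
def IsSchur (f : ℂ → ℂ) : Prop :=
  DifferentiableOn ℂ f (ball (0:ℂ) 1) ∧ ∀ z ∈ ball (0:ℂ) 1, ‖f z‖ ≤ 1

/-- `f` is the Schur function whose Schur parameter sequence is `α`; the Schur
algorithm recursion is imposed at every step whose parameter has modulus `< 1`
(at a parameter of modulus one the algorithm terminates, and indeed the condition
`g n 0 = α n` with `g n` Schur then forces `g n` to be the constant `α n`). -/
def HasSchurParams (f : ℂ → ℂ) (α : ℕ → ℂ) : Prop :=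
  ∃ g : ℕ → ℂ → ℂ, g 0 = f ∧ (∀ n, IsSchur (g n)) ∧ (∀ n, g n 0 = α n) ∧
    ∀ n, ‖α n‖ < 1 → ∀ z ∈ ball (0:ℂ) 1,
      z * g (n+1) z * (1 - (starRingEnd ℂ) (α n) * g n z) = g n z - α n

/-- The radial limit of `f` at the boundary point `z` equals `L`. -/
def RadialLimit (f : ℂ → ℂ) (z L : ℂ) : Prop :=
  Tendsto (fun r : ℝ => f ((r : ℂ) * z)) (nhdsWithin 1 (Set.Iio 1)) (𝓝 L)

/-- The set of angles `θ ∈ [0, 2π)` whose corresponding point `e^{iθ}` lies in `S ⊆ ∂𝔻`. -/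
def circleSet (S : Set ℂ) : Set ℝ :=
  {θ : ℝ | θ ∈ Set.Ico 0 (2 * Real.pi) ∧ Complex.exp (θ * Complex.I) ∈ S}

/-- Harmonic measure `ω_z(S)` of a Borel set `S ⊆ ∂𝔻` at `z ∈ 𝔻`. -/
def omega (z : ℂ) (S : Set ℂ) : ℝ :=
  ∫ θ in circleSet S,
    ((Complex.exp (θ * Complex.I) + z) / (Complex.exp (θ * Complex.I) - z)).re / (2 * Real.pi)

/-- The radial boundary value `ω_{f(e^{iθ})}(S) = lim_{r↑1} ω_{f(re^{iθ})}(S)`. -/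
def omegaBdry (f : ℂ → ℂ) (S : Set ℂ) (θ : ℝ) : ℝ :=
  limUnder (nhdsWithin (1:ℝ) (Set.Iio 1))
    (fun r : ℝ => omega (f ((r:ℂ) * Complex.exp (θ * Complex.I))) S)

/-- The reversed (Szegő) polynomial `P*(z) = z^n conj(P(1/conj z))` of a degree-`n` polynomial. -/
def szegoRev (n : ℕ) (P : Polynomial ℂ) : Polynomial ℂ :=
  (P.map (starRingEnd ℂ)).reflect n

/-- `α` is the Verblunsky coefficient sequence of the measure `μ` on the unit circle
(parametrized by `θ ∈ [0,2π)`): `Φ` are the monic orthogonal polynomials obtained by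
Gram–Schmidt from `1, z, z², …` in `L²(∂𝔻, dμ)` and the Szegő recursion
`Φ_{n+1}(z) = z Φ_n(z) - conj(α_n) Φ_n*(z)` holds. -/
def IsVerblunsky (μ : Measure ℝ) (Φ : ℕ → Polynomial ℂ) (α : ℕ → ℂ) : Prop :=
  (∀ n, (Φ n).Monic) ∧ (∀ n, (Φ n).natDegree = n) ∧
  (∀ n m : ℕ, m < n →
    ∫ θ, (Φ n).eval (Complex.exp (θ * Complex.I)) *
      (starRingEnd ℂ) (Complex.exp (θ * Complex.I)) ^ m ∂μ = 0) ∧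
  (∀ n, ‖α n‖ < 1) ∧
  (∀ n, Φ (n + 1) =
    Polynomial.X * Φ n - Polynomial.C ((starRingEnd ℂ) (α n)) * szegoRev n (Φ n))

/-- `β : ℤ → ℂ` is a right limit of the half-line sequence `α`. -/
def IsRightLimit (α : ℕ → ℂ) (β : ℤ → ℂ) : Prop :=
  ∃ nj : ℕ → ℕ, Tendsto nj atTop atTop ∧
    ∀ n : ℤ, Tendsto (fun j => α (n + nj j).toNat) atTop (𝓝 (β n))

/-- The `L²(μ)` norm of the boundary values of the polynomial `P`. -/
def opucNorm (μ : Measure ℝ) (P : Polynomial ℂ) : ℝ :=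
  Real.sqrt (∫ θ, ‖P.eval (Complex.exp (θ * Complex.I))‖ ^ 2 ∂μ)

/-- The measure `|φ|² dμ`, where `φ = P / ‖P‖_{L²(μ)}` is the normalized polynomial. -/
def diagMeasure (μ : Measure ℝ) (P : Polynomial ℂ) : Measure ℝ :=
  μ.withDensity (fun θ => ENNReal.ofReal
    (‖P.eval (Complex.exp (θ * Complex.I)) / ((opucNorm μ P : ℝ) : ℂ)‖ ^ 2))


/-- The pseudohyperbolic distance on the unit disc. -/
def pseudoDist (w₁ w₂ : ℂ) : ℝ :=
  ‖w₁ - w₂‖ /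
    (Real.sqrt (1 - ‖w₁‖ ^ 2) * Real.sqrt (1 - ‖w₂‖ ^ 2))

/-- The Möbius transformation `T₊(z,γ)` with coefficient matrix `[[1, -γ], [-z conj γ, z]]`. -/
def Tplus (z γ w : ℂ) : ℂ := (w - γ) / (-z * (starRingEnd ℂ) γ * w + z)

/-- The Möbius transformation `T₋(z,γ)` with coefficient matrix `[[z, -conj γ], [-z γ, 1]]`. -/
def Tminus (z γ w : ℂ) : ℂ := (z * w - (starRingEnd ℂ) γ) / (-z * γ * w + 1)

def mob (a w : ℂ) : ℂ := (w - a) / (1 - (starRingEnd ℂ) a * w)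

lemma normSq_key (a w : ℂ) :
    Complex.normSq (1 - (starRingEnd ℂ) a * w) - Complex.normSq (w - a)
      = (1 - Complex.normSq a) * (1 - Complex.normSq w) := by
  simp only [Complex.normSq_apply, Complex.sub_re, Complex.sub_im, Complex.one_re,
    Complex.one_im, Complex.mul_re, Complex.mul_im, Complex.conj_re, Complex.conj_im]
  ring

lemma denom_ne (a w : ℂ) (ha : ‖a‖ < 1) (hw : ‖w‖ < 1) :
    1 - (starRingEnd ℂ) a * w ≠ 0 := by
  intro h
  have h1 : (1:ℂ) = (starRingEnd ℂ) a * w := by linear_combination h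
  have := congrArg (fun x : ℂ => ‖x‖) h1
  simp only [norm_one, norm_mul, Complex.norm_conj] at this
  nlinarith [norm_nonneg a, norm_nonneg w]

lemma mob_mem (a w : ℂ) (ha : ‖a‖ < 1) (hw : ‖w‖ < 1) :
    ‖mob a w‖ < 1 := by
  have hd := denom_ne a w ha hw
  have hdpos : 0 < Complex.normSq (1 - (starRingEnd ℂ) a * w) := by
    simpa [Complex.normSq_pos] using hd
  have hkey := normSq_key a w
  have hsa : Complex.normSq a < 1 := by
    rw [← Complex.sq_norm]; nlinarith [norm_nonneg a]
  have hsw : Complex.normSq w < 1 := by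
    rw [← Complex.sq_norm]; nlinarith [norm_nonneg w]
  have hlt : Complex.normSq (w - a) < Complex.normSq (1 - (starRingEnd ℂ) a * w) := by
    nlinarith
  rw [mob, norm_div, div_lt_one (norm_pos_iff.mpr hd)]
  have := Real.sqrt_lt_sqrt (Complex.normSq_nonneg _) hlt
  simpa [Complex.norm_def] using this

lemma mob_inv (a w : ℂ) (ha : ‖a‖ < 1) (hw : ‖w‖ < 1) :
    mob (-a) (mob a w) = w := by
  have hd := denom_ne a w ha hw
  have hda : (1 : ℂ) - (starRingEnd ℂ) a * a ≠ 0 := denom_ne a a ha ha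
  rw [mob, mob]
  have hda' : (1 : ℂ) - a * (starRingEnd ℂ) a ≠ 0 := by
    rw [mul_comm]; exact hda
  rw [map_neg]
  have e := div_mul_cancel₀ (w - a) hd
  have e1 : (w - a) / (1 - (starRingEnd ℂ) a * w) - -a
      = w * (1 - (starRingEnd ℂ) a * a) / (1 - (starRingEnd ℂ) a * w) := by
    rw [eq_div_iff hd]; linear_combination e
  have e2 : 1 - -(starRingEnd ℂ) a * ((w - a) / (1 - (starRingEnd ℂ) a * w))
      = (1 - (starRingEnd ℂ) a * a) / (1 - (starRingEnd ℂ) a * w) := by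
    rw [eq_div_iff hd]; linear_combination ((starRingEnd ℂ) a) * e
  rw [e1, e2, eq_comm, eq_div_iff (div_ne_zero hda hd)]
  ring

lemma mob_diff (a w₁ w₂ : ℂ) (h₁ : 1 - (starRingEnd ℂ) a * w₁ ≠ 0)
    (h₂ : 1 - (starRingEnd ℂ) a * w₂ ≠ 0) :
    mob a w₁ - mob a w₂ = ((1 - (starRingEnd ℂ) a * a) * (w₁ - w₂)) /
      ((1 - (starRingEnd ℂ) a * w₁) * (1 - (starRingEnd ℂ) a * w₂)) := by
  rw [mob, mob, div_sub_div _ _ h₁ h₂]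
  ring


lemma pseudo_mob (a w₁ w₂ : ℂ) (ha : ‖a‖ < 1)
    (h1 : ‖w₁‖ < 1) (h2 : ‖w₂‖ < 1) :
    pseudoDist (mob a w₁) (mob a w₂) = pseudoDist w₁ w₂ := by
  have hd1 := denom_ne a w₁ ha h1
  have hd2 := denom_ne a w₂ ha h2
  have hsa : Complex.normSq a < 1 := by rw [← Complex.sq_norm]; nlinarith [norm_nonneg a]
  have hn1 : Complex.normSq w₁ < 1 := by rw [← Complex.sq_norm]; nlinarith [norm_nonneg w₁]
  have hn2 : Complex.normSq w₂ < 1 := by rw [← Complex.sq_norm]; nlinarith [norm_nonneg w₂]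
  have hs0 : (0:ℝ) ≤ 1 - Complex.normSq a := by linarith
  have habs1 : (1:ℂ) - (starRingEnd ℂ) a * a = ((1 - Complex.normSq a : ℝ) : ℂ) := by
    rw [mul_comm, Complex.mul_conj]; norm_cast
  have hA : ‖mob a w₁ - mob a w₂‖
      = (1 - Complex.normSq a) * ‖w₁ - w₂‖
        / (‖1 - (starRingEnd ℂ) a * w₁‖ * ‖1 - (starRingEnd ℂ) a * w₂‖) := by
    rw [mob_diff a w₁ w₂ hd1 hd2, norm_div, norm_mul, norm_mul, habs1, Complex.norm_of_nonneg hs0]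
  have hB : ∀ w : ℂ, ‖w‖ < 1 →
      1 - ‖mob a w‖ ^ 2
        = (1 - Complex.normSq a) * (1 - Complex.normSq w)
          / Complex.normSq (1 - (starRingEnd ℂ) a * w) := by
    intro w hw
    have hd := denom_ne a w ha hw
    have hdpos : 0 < Complex.normSq (1 - (starRingEnd ℂ) a * w) := by
      simpa [Complex.normSq_pos] using hd
    rw [Complex.sq_norm, mob, Complex.normSq_div, ← normSq_key a w]
    rw [eq_div_iff hdpos.ne', sub_mul, div_mul_cancel₀ _ hdpos.ne', one_mul]
  have hsq : ∀ (n : ℝ) (d : ℂ), 0 ≤ n → d ≠ 0 →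
      Real.sqrt ((1 - Complex.normSq a) * n / Complex.normSq d)
        = Real.sqrt (1 - Complex.normSq a) * Real.sqrt n / ‖d‖ := by
    intro n d hn hd
    have hD : 0 < ‖d‖ := norm_pos_iff.mpr hd
    rw [show (1 - Complex.normSq a) * n / Complex.normSq d
        = (Real.sqrt (1 - Complex.normSq a) * Real.sqrt n / ‖d‖)^2 by
      rw [div_pow, mul_pow, Real.sq_sqrt hs0, Real.sq_sqrt hn, Complex.sq_norm]]
    exact Real.sqrt_sq (by positivity)
  rw [pseudoDist, pseudoDist, hA, hB w₁ h1, hB w₂ h2,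
    hsq (1 - Complex.normSq w₁) _ (by linarith) hd1,
    hsq (1 - Complex.normSq w₂) _ (by linarith) hd2,
    Complex.sq_norm w₁, Complex.sq_norm w₂]
  have hD1 : 0 < ‖1 - (starRingEnd ℂ) a * w₁‖ := norm_pos_iff.mpr hd1
  have hD2 : 0 < ‖1 - (starRingEnd ℂ) a * w₂‖ := norm_pos_iff.mpr hd2
  have ht : 0 < Real.sqrt (1 - Complex.normSq a) := Real.sqrt_pos.2 (by linarith)
  have hu1 : 0 < Real.sqrt (1 - Complex.normSq w₁) := Real.sqrt_pos.2 (by linarith)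
  have hu2 : 0 < Real.sqrt (1 - Complex.normSq w₂) := Real.sqrt_pos.2 (by linarith)
  have ht2 : Real.sqrt (1 - Complex.normSq a) * Real.sqrt (1 - Complex.normSq a)
      = 1 - Complex.normSq a := Real.mul_self_sqrt hs0
  have hne : (1:ℝ) - Complex.normSq a ≠ 0 := by linarith
  rw [show Real.sqrt (1 - Complex.normSq a) * Real.sqrt (1 - Complex.normSq w₁)
        / ‖1 - (starRingEnd ℂ) a * w₁‖ * (Real.sqrt (1 - Complex.normSq a)
        * Real.sqrt (1 - Complex.normSq w₂) / ‖1 - (starRingEnd ℂ) a * w₂‖)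
      = (Real.sqrt (1 - Complex.normSq a) * Real.sqrt (1 - Complex.normSq a))
        * (Real.sqrt (1 - Complex.normSq w₁) * Real.sqrt (1 - Complex.normSq w₂))
        / (‖1 - (starRingEnd ℂ) a * w₁‖ * ‖1 - (starRingEnd ℂ) a * w₂‖) by ring, ht2]
  field_simp
  rw [mul_assoc, mul_div_assoc, div_self (by rw [mul_comm w₁, mul_comm w₂]; exact (mul_pos hD1 hD2).ne'), mul_one]

lemma pseudo_rot (u w₁ w₂ : ℂ) (hu : ‖u‖ = 1) :
    pseudoDist (u * w₁) (u * w₂) = pseudoDist w₁ w₂ := by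
  simp [pseudoDist, ← mul_sub, norm_mul, hu]

lemma pseudo_scale (z w₁ w₂ : ℂ) (hz : ‖z‖ ≤ 1)
    (h1 : ‖w₁‖ < 1) (h2 : ‖w₂‖ < 1) :
    pseudoDist (z * w₁) (z * w₂) ≤ ‖z‖ * pseudoDist w₁ w₂ := by
  have hzw1 : ‖z * w₁‖ ≤ ‖w₁‖ := by
    rw [norm_mul]; nlinarith [norm_nonneg w₁, norm_nonneg z]
  have hzw2 : ‖z * w₂‖ ≤ ‖w₂‖ := by
    rw [norm_mul]; nlinarith [norm_nonneg w₂, norm_nonneg z]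
  have hu1 : 0 < Real.sqrt (1 - ‖w₁‖ ^ 2) := Real.sqrt_pos.2 (by nlinarith [norm_nonneg w₁])
  have hu2 : 0 < Real.sqrt (1 - ‖w₂‖ ^ 2) := Real.sqrt_pos.2 (by nlinarith [norm_nonneg w₂])
  rw [pseudoDist, pseudoDist, ← mul_sub, norm_mul, mul_div_assoc]
  gcongr

theorem statement10 (γ : ℂ) (hγ : ‖γ‖ < 1) :
    (∀ z ∈ sphere (0:ℂ) 1,
      (DifferentiableOn ℂ (Tplus z γ) (ball (0:ℂ) 1) ∧
        Set.BijOn (Tplus z γ) (ball (0:ℂ) 1) (ball (0:ℂ) 1) ∧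
        ∀ w₁ ∈ ball (0:ℂ) 1, ∀ w₂ ∈ ball (0:ℂ) 1,
          pseudoDist (Tplus z γ w₁) (Tplus z γ w₂) = pseudoDist w₁ w₂) ∧
      (DifferentiableOn ℂ (Tminus z γ) (ball (0:ℂ) 1) ∧
        Set.BijOn (Tminus z γ) (ball (0:ℂ) 1) (ball (0:ℂ) 1) ∧
        ∀ w₁ ∈ ball (0:ℂ) 1, ∀ w₂ ∈ ball (0:ℂ) 1,
          pseudoDist (Tminus z γ w₁) (Tminus z γ w₂) = pseudoDist w₁ w₂)) ∧
    (∀ z ∈ ball (0:ℂ) 1,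
      Set.MapsTo (Tminus z γ) (ball (0:ℂ) 1) (ball (0:ℂ) 1) ∧
      ∀ w₁ ∈ ball (0:ℂ) 1, ∀ w₂ ∈ ball (0:ℂ) 1,
        pseudoDist (Tminus z γ w₁) (Tminus z γ w₂) ≤ ‖z‖ * pseudoDist w₁ w₂) := by
  have hb : ∀ w : ℂ, w ∈ Metric.ball (0:ℂ) 1 ↔ ‖w‖ < 1 := by
    intro w; simp [Metric.mem_ball, Complex.dist_eq]
  have hγc : ‖(starRingEnd ℂ) γ‖ < 1 := by simpa using hγ
  have hγn : ‖-γ‖ < 1 := by simpa using hγ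
  have hγcn : ‖-(starRingEnd ℂ) γ‖ < 1 := by simpa using hγ
  have hTm : ∀ z w : ℂ, Tminus z γ w = mob ((starRingEnd ℂ) γ) (z * w) := by
    intro z w
    rw [Tminus, mob, Complex.conj_conj]
    congr 1
    ring
  constructor
  · intro z hz
    have hz1 : ‖z‖ = 1 := by
      simpa [Complex.dist_eq] using hz
    have hzne : z ≠ 0 := by
      intro h; rw [h] at hz1; simp at hz1
    have hzinv : ‖z⁻¹‖ = 1 := by rw [norm_inv, hz1]; norm_num
    have hTp : ∀ w : ℂ, Tplus z γ w = z⁻¹ * mob γ w := by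
      intro w
      rw [Tplus, mob, show -z * (starRingEnd ℂ) γ * w + z
        = (1 - (starRingEnd ℂ) γ * w) * z by ring, ← div_div, div_eq_mul_inv, mul_comm]
    refine ⟨⟨?_, ?_, ?_⟩, ?_, ?_, ?_⟩
    · -- Tplus differentiable
      show DifferentiableOn ℂ (fun w => (w - γ) / (-z * (starRingEnd ℂ) γ * w + z))
        (Metric.ball (0:ℂ) 1)
      apply DifferentiableOn.div
      · fun_prop
      · fun_prop
      · intro w hw
        rw [show -z * (starRingEnd ℂ) γ * w + z = z * (1 - (starRingEnd ℂ) γ * w) by ring]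
        exact mul_ne_zero hzne (denom_ne γ w hγ ((hb w).1 hw))
    · -- Tplus bijOn
      have hmt : Set.MapsTo (Tplus z γ) (Metric.ball (0:ℂ) 1) (Metric.ball (0:ℂ) 1) := by
        intro w hw
        rw [hb, hTp, norm_mul, hzinv, one_mul]
        exact mob_mem γ w hγ ((hb w).1 hw)
      have hmg : Set.MapsTo (fun v => mob (-γ) (z * v)) (Metric.ball (0:ℂ) 1)
          (Metric.ball (0:ℂ) 1) := by
        intro v hv
        rw [hb]
        exact mob_mem (-γ) (z * v) hγn (by rw [norm_mul, hz1, one_mul]; exact (hb v).1 hv)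
      refine Set.InvOn.bijOn ⟨?_, ?_⟩ hmt hmg
      · intro w hw
        simp only [hTp]
        rw [show z * (z⁻¹ * mob γ w) = mob γ w by field_simp]
        exact mob_inv γ w hγ ((hb w).1 hw)
      · intro v hv
        have hzv : ‖z * v‖ < 1 := by
          rw [norm_mul, hz1, one_mul]; exact (hb v).1 hv
        simp only [hTp]
        have : mob γ (mob (-γ) (z * v)) = z * v := by
          have := mob_inv (-γ) (z * v) hγn hzv
          rwa [neg_neg] at this
        rw [this]
        field_simp
    · -- Tplus pseudoDist
      intro w₁ hw₁ w₂ hw₂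
      rw [hTp, hTp, pseudo_rot z⁻¹ _ _ hzinv,
        pseudo_mob γ w₁ w₂ hγ ((hb w₁).1 hw₁) ((hb w₂).1 hw₂)]
    · -- Tminus differentiable
      show DifferentiableOn ℂ (fun w => (z * w - (starRingEnd ℂ) γ) / (-z * γ * w + 1))
        (Metric.ball (0:ℂ) 1)
      apply DifferentiableOn.div
      · fun_prop
      · fun_prop
      · intro w hw
        have := denom_ne ((starRingEnd ℂ) γ) (z * w) hγc
          (by rw [norm_mul, hz1, one_mul]; exact (hb w).1 hw)
        rw [Complex.conj_conj] at this
        rw [show -z * γ * w + 1 = 1 - γ * (z * w) by ring]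
        exact this
    · -- Tminus bijOn
      have hmt : Set.MapsTo (Tminus z γ) (Metric.ball (0:ℂ) 1) (Metric.ball (0:ℂ) 1) := by
        intro w hw
        rw [hb, hTm]
        exact mob_mem _ _ hγc (by rw [norm_mul, hz1, one_mul]; exact (hb w).1 hw)
      have hmg : Set.MapsTo (fun v => z⁻¹ * mob (-(starRingEnd ℂ) γ) v) (Metric.ball (0:ℂ) 1)
          (Metric.ball (0:ℂ) 1) := by
        intro v hv
        rw [hb, norm_mul, hzinv, one_mul]
        exact mob_mem _ _ hγcn ((hb v).1 hv)
      refine Set.InvOn.bijOn ⟨?_, ?_⟩ hmt hmg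
      · intro w hw
        simp only [hTm]
        rw [mob_inv ((starRingEnd ℂ) γ) (z * w) hγc
          (by rw [norm_mul, hz1, one_mul]; exact (hb w).1 hw)]
        field_simp
      · intro v hv
        simp only [hTm]
        rw [show z * (z⁻¹ * mob (-(starRingEnd ℂ) γ) v) = mob (-(starRingEnd ℂ) γ) v by
          field_simp]
        have := mob_inv (-(starRingEnd ℂ) γ) v hγcn ((hb v).1 hv)
        rwa [neg_neg] at this
    · -- Tminus pseudoDist
      intro w₁ hw₁ w₂ hw₂
      rw [hTm, hTm,
        pseudo_mob ((starRingEnd ℂ) γ) (z * w₁) (z * w₂) hγc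
          (by rw [norm_mul, hz1, one_mul]; exact (hb w₁).1 hw₁)
          (by rw [norm_mul, hz1, one_mul]; exact (hb w₂).1 hw₂),
        pseudo_rot z _ _ hz1]
  · intro z hz
    have hz1 : ‖z‖ < 1 := (hb z).1 hz
    have hzw : ∀ w : ℂ, ‖w‖ < 1 → ‖z * w‖ < 1 := by
      intro w hw
      rw [norm_mul]
      nlinarith [norm_nonneg z, norm_nonneg w]
    constructor
    · intro w hw
      rw [hb, hTm]
      exact mob_mem _ _ hγc (hzw w ((hb w).1 hw))
    · intro w₁ hw₁ w₂ hw₂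
      rw [hTm, hTm,
        pseudo_mob ((starRingEnd ℂ) γ) (z * w₁) (z * w₂) hγc
          (hzw w₁ ((hb w₁).1 hw₁)) (hzw w₂ ((hb w₂).1 hw₂))]
      exact pseudo_scale z w₁ w₂ (le_of_lt hz1) ((hb w₁).1 hw₁) ((hb w₂).1 hw₂)

end
end

section
/- Let (α_n)_{n∈ℤ} and (β_n)_{n∈ℤ} be two doubly infinite sequences of Verblunsky coefficients (|α_n| ≤ 1, |β_n| ≤ 1) such that their associated whole-line CMV matrices are both reflectionless on a common Borel set A ⊆ ∂𝔻 of positive Lebesgue measure. If α_n = β_n for all n < 0, then α_n = β_n for all n ∈ ℤ. -/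
open MeasureTheory Filter Metric Complex Set Topology

noncomputable section

lemma abs_mul_exp (u θ : ℝ) : ‖(u:ℂ) * Complex.exp (θ * Complex.I)‖ = |u| := by
  rw [norm_mul, Complex.norm_exp_ofReal_mul_I, Complex.norm_real, Real.norm_eq_abs, mul_one]

/-- Mean value property for `log ‖f‖` of a nonvanishing analytic function on a disc. -/
lemma mvlog {f : ℂ → ℂ} {R s : ℝ} (hd : DifferentiableOn ℂ f (ball 0 R))
    (hs0 : 0 < s) (hsR : s < R) (hnz : ∀ z ∈ closedBall (0:ℂ) s, f z ≠ 0) :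
    ∫ θ in (0:ℝ)..(2*Real.pi),
        Real.log (‖f ((s:ℂ) * Complex.exp (θ*Complex.I))‖)
      = 2*Real.pi*Real.log (‖f 0‖) := by
  have hsub : closedBall (0:ℂ) s ⊆ ball 0 R := closedBall_subset_ball hsR
  have hmem : ∀ (u θ : ℝ), |u| ≤ s → ((u:ℂ) * Complex.exp (θ * Complex.I)) ∈ closedBall (0:ℂ) s := by
    intro u θ hu
    simpa [Complex.dist_eq, abs_mul_exp] using hu
  have han : AnalyticOnNhd ℂ f (ball 0 R) := hd.analyticOnNhd isOpen_ball
  set G : ℂ → ℂ := fun z => deriv f z / f z with hG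
  have hGc : ContinuousOn G (closedBall (0:ℂ) s) :=
    ((han.deriv.continuousOn).mono hsub).div ((hd.continuousOn).mono hsub) hnz
  have hGd : ∀ z ∈ ball (0:ℂ) s, DifferentiableAt ℂ G z := by
    intro z hz
    have hz' : z ∈ ball (0:ℂ) R := ball_subset_ball hsR.le hz
    exact ((han.deriv z hz').differentiableAt).div (hd.differentiableAt (isOpen_ball.mem_nhds hz'))
      (hnz z (ball_subset_closedBall hz))
  have key : ∀ θ : ℝ, (∫ u in (0:ℝ)..s, (Complex.exp (θ*Complex.I) * G ((u:ℂ) * Complex.exp (θ*Complex.I))).re)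
      = Real.log (‖f ((s:ℂ) * Complex.exp (θ*Complex.I))‖) - Real.log (‖f 0‖) := by
    intro θ
    set e : ℂ := Complex.exp (θ*Complex.I) with he
    have habs : ∀ u : ℝ, u ∈ uIcc (0:ℝ) s → ((u:ℂ) * e) ∈ closedBall (0:ℂ) s := by
      intro u hu
      rw [uIcc_of_le hs0.le] at hu
      exact hmem u θ (abs_le.2 ⟨by linarith [hu.1], hu.2⟩)
    have hDeriv : ∀ u ∈ uIcc (0:ℝ) s,
        HasDerivAt (fun v : ℝ => Real.log (‖f ((v:ℂ) * e)‖)) ((e * G ((u:ℂ) * e)).re) u := by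
      intro u hu
      set z : ℂ := (u:ℂ) * e with hz
      have hzc : z ∈ closedBall (0:ℂ) s := habs u hu
      have hzb : z ∈ ball (0:ℂ) R := hsub hzc
      have hfz : f z ≠ 0 := hnz z hzc
      have h1 : HasDerivAt (fun x : ℂ => f (x * e)) (deriv f z * e) (u:ℂ) := by
        have hf : HasDerivAt f (deriv f z) z := (hd.differentiableAt (isOpen_ball.mem_nhds hzb)).hasDerivAt
        have h2 : HasDerivAt (fun x : ℂ => x * e) e (u:ℂ) := by
          simpa using (hasDerivAt_id ((u:ℂ))).mul_const e
        exact hf.comp (u:ℂ) h2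
      have h3 : HasDerivAt (fun v : ℝ => f ((v:ℂ) * e)) (deriv f z * e) u := h1.comp_ofReal
      set w' : ℂ := deriv f z * e with hw'
      have hre : HasDerivAt (fun v : ℝ => (f ((v:ℂ) * e)).re) w'.re u :=
        Complex.reCLM.hasFDerivAt.comp_hasDerivAt u h3
      have him : HasDerivAt (fun v : ℝ => (f ((v:ℂ) * e)).im) w'.im u :=
        Complex.imCLM.hasFDerivAt.comp_hasDerivAt u h3
      have hns : HasDerivAt (fun v : ℝ => Complex.normSq (f ((v:ℂ) * e)))
          (2*((f z).re * w'.re + (f z).im * w'.im)) u := by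
        have h4 := (hre.mul hre).add (him.mul him)
        simp only [Complex.normSq_apply]
        refine h4.congr_deriv ?_
        ring
      have hnsne : Complex.normSq (f z) ≠ 0 := by
        simpa [Complex.normSq_eq_zero] using hfz
      have hlog : HasDerivAt (fun v : ℝ => Real.log (Complex.normSq (f ((v:ℂ) * e))))
          (2*((f z).re * w'.re + (f z).im * w'.im) / Complex.normSq (f z)) u := hns.log hnsne
      have heq : (fun v : ℝ => Real.log (‖f ((v:ℂ) * e)‖))
          = fun v : ℝ => Real.log (Complex.normSq (f ((v:ℂ) * e))) / 2 := by
        funext v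
        rw [Complex.norm_def, Real.log_sqrt (Complex.normSq_nonneg _)]
      rw [heq]
      have h5 := hlog.div_const 2
      refine h5.congr_deriv ?_
      have h6 : e * G z = w' / f z := by
        rw [hG, hw']; ring
      rw [h6, Complex.div_re]
      have : Complex.normSq (f z) ≠ 0 := hnsne
      field_simp
    have hcont : ContinuousOn (fun u : ℝ => (e * G ((u:ℂ) * e)).re) (uIcc (0:ℝ) s) := by
      have h1 : ContinuousOn (fun u : ℝ => ((u:ℂ) * e)) (uIcc (0:ℝ) s) :=
        (Complex.continuous_ofReal.mul continuous_const).continuousOn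
      have h2 : ContinuousOn (fun u : ℝ => G ((u:ℂ) * e)) (uIcc (0:ℝ) s) :=
        hGc.comp h1 (fun u hu => habs u hu)
      exact Complex.continuous_re.comp_continuousOn (continuousOn_const.mul h2)
    have h7 := intervalIntegral.integral_eq_sub_of_hasDerivAt hDeriv hcont.intervalIntegrable
    simpa using h7
  -- Fubini and vanishing of circle integrals
  have h2π : (0:ℝ) ≤ 2*Real.pi := by positivity
  have hGcont2 : ∀ u : ℝ, 0 ≤ u → u ≤ s → ContinuousOn
      (fun θ : ℝ => Complex.exp (θ*Complex.I) * G ((u:ℂ)*Complex.exp (θ*Complex.I))) univ := by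
    intro u hu0 hus
    have c1 : Continuous (fun θ : ℝ => Complex.exp (θ*Complex.I)) :=
      Complex.continuous_exp.comp (Complex.continuous_ofReal.mul continuous_const)
    have c2 : Continuous (fun θ : ℝ => (u:ℂ) * Complex.exp (θ*Complex.I)) := continuous_const.mul c1
    have c3 : ContinuousOn (fun θ : ℝ => G ((u:ℂ)*Complex.exp (θ*Complex.I))) univ :=
      hGc.comp c2.continuousOn (fun θ _ => hmem u θ (le_of_eq (_root_.abs_of_nonneg hu0) |>.trans hus))
    exact c1.continuousOn.mul c3
  have inner0 : ∀ u : ℝ, u ∈ Ioc (0:ℝ) s →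
      (∫ θ in (0:ℝ)..(2*Real.pi), (Complex.exp (θ*Complex.I) * G ((u:ℂ)*Complex.exp (θ*Complex.I))).re) = 0 := by
    intro u hu
    have hu0 : 0 < u := hu.1
    have circ : (∮ z in C(0, u), G z) = 0 := by
      apply Complex.circleIntegral_eq_zero_of_differentiable_on_off_countable hu0.le Set.countable_empty
      · exact hGc.mono (closedBall_subset_closedBall hu.2)
      · intro z hz
        exact hGd z (lt_of_lt_of_le (mem_ball.1 hz.1) hu.2)
    have hcirc : (∮ z in C(0, u), G z)
        = ∫ θ in (0:ℝ)..(2*Real.pi), ((u:ℂ)*Complex.I) * (Complex.exp (θ*Complex.I) * G ((u:ℂ)*Complex.exp (θ*Complex.I))) := by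
      rw [circleIntegral]
      apply intervalIntegral.integral_congr
      intro θ _
      simp only [deriv_circleMap, circleMap, smul_eq_mul, zero_add]
      ring
    rw [hcirc, intervalIntegral.integral_const_mul] at circ
    have huI : ((u:ℂ)*Complex.I) ≠ 0 := by
      simp [Complex.ext_iff, hu0.ne']
    have hJ : (∫ θ in (0:ℝ)..(2*Real.pi), Complex.exp (θ*Complex.I) * G ((u:ℂ)*Complex.exp (θ*Complex.I))) = 0 :=
      (mul_eq_zero.1 circ).resolve_left huI
    have hJint : IntervalIntegrable
        (fun θ : ℝ => Complex.exp (θ*Complex.I) * G ((u:ℂ)*Complex.exp (θ*Complex.I))) volume 0 (2*Real.pi) :=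
      ((hGcont2 u hu0.le hu.2).mono (subset_univ _)).intervalIntegrable
    have hre := Complex.reCLM.intervalIntegral_comp_comm hJint (a := 0) (b := 2*Real.pi)
    calc (∫ θ in (0:ℝ)..(2*Real.pi), (Complex.exp (θ*Complex.I) * G ((u:ℂ)*Complex.exp (θ*Complex.I))).re)
        = Complex.reCLM (∫ θ in (0:ℝ)..(2*Real.pi), Complex.exp (θ*Complex.I) * G ((u:ℂ)*Complex.exp (θ*Complex.I))) := hre
      _ = 0 := by rw [hJ]; simp
  have swap : (∫ θ in (0:ℝ)..(2*Real.pi), ∫ u in (0:ℝ)..s, (Complex.exp (θ*Complex.I) * G ((u:ℂ)*Complex.exp (θ*Complex.I))).re)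
      = ∫ u in (0:ℝ)..s, ∫ θ in (0:ℝ)..(2*Real.pi), (Complex.exp (θ*Complex.I) * G ((u:ℂ)*Complex.exp (θ*Complex.I))).re := by
    rw [intervalIntegral.integral_of_le h2π, intervalIntegral.integral_of_le hs0.le]
    simp_rw [intervalIntegral.integral_of_le hs0.le, intervalIntegral.integral_of_le h2π]
    apply MeasureTheory.integral_integral_swap
    rw [Measure.prod_restrict]
    have hc : ContinuousOn (Function.uncurry (fun θ u : ℝ => (Complex.exp (θ*Complex.I) * G ((u:ℂ)*Complex.exp (θ*Complex.I))).re))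
        ((Icc (0:ℝ) (2*Real.pi)) ×ˢ (Icc (0:ℝ) s)) := by
      have c1 : Continuous (fun p : ℝ × ℝ => Complex.exp (p.1*Complex.I)) :=
        Complex.continuous_exp.comp ((Complex.continuous_ofReal.comp continuous_fst).mul continuous_const)
      have c2 : Continuous (fun p : ℝ × ℝ => (p.2:ℂ) * Complex.exp (p.1*Complex.I)) :=
        (Complex.continuous_ofReal.comp continuous_snd).mul c1
      have c3 : ContinuousOn (fun p : ℝ × ℝ => G ((p.2:ℂ)*Complex.exp (p.1*Complex.I)))
          ((Icc (0:ℝ) (2*Real.pi)) ×ˢ (Icc (0:ℝ) s)) := by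
        apply hGc.comp c2.continuousOn
        intro p hp
        exact hmem p.2 p.1 (by rw [_root_.abs_of_nonneg hp.2.1]; exact hp.2.2)
      exact Complex.continuous_re.comp_continuousOn (c1.continuousOn.mul c3)
    exact (hc.integrableOn_compact (isCompact_Icc.prod isCompact_Icc)).mono_set
      (Set.prod_mono Ioc_subset_Icc_self Ioc_subset_Icc_self)
  have hInt1 : IntervalIntegrable (fun θ : ℝ => Real.log (‖f ((s:ℂ) * Complex.exp (θ*Complex.I))‖))
      volume 0 (2*Real.pi) := by
    apply ContinuousOn.intervalIntegrable
    apply Continuous.continuousOn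
    apply Continuous.log
    · apply continuous_norm.comp
      apply ContinuousOn.comp_continuous hd.continuousOn
      · exact continuous_const.mul (Complex.continuous_exp.comp (Complex.continuous_ofReal.mul continuous_const))
      · intro θ
        exact hsub (hmem s θ (le_of_eq (_root_.abs_of_nonneg hs0.le)))
    · intro θ
      simpa using (norm_ne_zero_iff).2 (hnz _ (hmem s θ (le_of_eq (_root_.abs_of_nonneg hs0.le))))
  have final : (∫ θ in (0:ℝ)..(2*Real.pi),
      (Real.log (‖f ((s:ℂ) * Complex.exp (θ*Complex.I))‖) - Real.log (‖f 0‖))) = 0 := by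
    have hcongr : (∫ θ in (0:ℝ)..(2*Real.pi),
        (Real.log (‖f ((s:ℂ) * Complex.exp (θ*Complex.I))‖) - Real.log (‖f 0‖)))
        = ∫ θ in (0:ℝ)..(2*Real.pi), ∫ u in (0:ℝ)..s, (Complex.exp (θ*Complex.I) * G ((u:ℂ)*Complex.exp (θ*Complex.I))).re :=
      intervalIntegral.integral_congr (fun θ _ => (key θ).symm)
    rw [hcongr, swap, intervalIntegral.integral_of_le hs0.le]
    rw [MeasureTheory.setIntegral_congr_fun measurableSet_Ioc (fun u hu => inner0 u hu)]
    simp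
  rw [intervalIntegral.integral_sub hInt1 intervalIntegrable_const, intervalIntegral.integral_const] at final
  simp only [sub_zero, smul_eq_mul] at final
  linarith


/-- Zeros of a non-trivial analytic function in a compact subdisc are finite. -/
lemma zeros_finite {f : ℂ → ℂ} (hd : DifferentiableOn ℂ f (ball 0 1)) (hf0 : f 0 ≠ 0)
    {ρ : ℝ} (hρ : ρ < 1) :
    {z ∈ closedBall (0:ℂ) ρ | f z = 0}.Finite := by
  by_cases hρ0 : ρ < 0
  · simp [closedBall_eq_empty.2 hρ0]
  push_neg at hρ0
  have han : AnalyticOnNhd ℂ f (ball 0 1) := hd.analyticOnNhd isOpen_ball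
  have hsub : closedBall (0:ℂ) ρ ⊆ ball 0 1 := closedBall_subset_ball hρ
  by_contra hinf
  rw [← Set.not_infinite, not_not] at hinf
  obtain ⟨z₀, hz₀mem, hz₀acc⟩ := hinf.exists_accPt_of_subset_isCompact
    (isCompact_closedBall (0:ℂ) ρ) (fun z hz => hz.1)
  have hz₀ : z₀ ∈ ball (0:ℂ) 1 := hsub hz₀mem
  have hfreq : ∃ᶠ z in 𝓝[≠] z₀, f z = 0 := by
    have h1 := accPt_iff_frequently.1 hz₀acc
    rw [frequently_nhdsWithin_iff]
    exact h1.mono (fun z hz => ⟨hz.2.2, hz.1⟩)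
  have h2 := han.eqOn_zero_of_preconnected_of_frequently_eq_zero
    (convex_ball (0:ℂ) 1).isPreconnected hz₀ hfreq
  exact hf0 (h2 (mem_ball_self one_pos))

/-- Factor out the zero of `f` at `z₀` to full order: a global factorization on the disc. -/
lemma factor_zero {f : ℂ → ℂ} (hd : DifferentiableOn ℂ f (ball 0 1))
    {z₁ : ℂ} (hz₁ : z₁ ∈ ball (0:ℂ) 1) (hfz₁ : f z₁ ≠ 0)
    {z₀ : ℂ} (hz₀ : z₀ ∈ ball (0:ℂ) 1) :
    ∃ (m : ℕ) (f₁ : ℂ → ℂ), DifferentiableOn ℂ f₁ (ball 0 1) ∧ f₁ z₀ ≠ 0 ∧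
      (∀ z ∈ ball (0:ℂ) 1, f z = (z - z₀)^m * f₁ z) ∧
      (∀ z, z ≠ z₀ → f₁ z = f z / (z - z₀)^m) ∧ (f z₀ = 0 → 1 ≤ m) := by
  have han : AnalyticOnNhd ℂ f (ball 0 1) := hd.analyticOnNhd isOpen_ball
  have hat : AnalyticAt ℂ f z₀ := han z₀ hz₀
  have hord : analyticOrderAt f z₀ ≠ ⊤ := by
    intro h
    rw [analyticOrderAt_eq_top] at h
    have := han.eqOn_zero_of_preconnected_of_eventuallyEq_zero
      (convex_ball (0:ℂ) 1).isPreconnected hz₀ h hz₁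
    exact hfz₁ this
  obtain ⟨m, hm⟩ := WithTop.ne_top_iff_exists.1 hord
  obtain ⟨g, hgan, hgz₀, hglocal⟩ := hat.analyticOrderAt_eq_natCast.1 hm.symm
  classical
  set f₁ : ℂ → ℂ := fun z => if z = z₀ then g z₀ else f z / (z - z₀)^m with hf₁
  have heq : ∀ᶠ z in 𝓝 z₀, f₁ z = g z := by
    filter_upwards [hglocal] with z hz
    by_cases h : z = z₀
    · subst h
      simp [hf₁]
    · rw [hf₁]
      simp only [if_neg h]
      rw [hz, smul_eq_mul]
      field_simp [pow_ne_zero m (sub_ne_zero.2 h)]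
  refine ⟨m, f₁, ?_, ?_, ?_, ?_, ?_⟩
  · intro z hz
    by_cases h : z = z₀
    · subst h
      have : DifferentiableAt ℂ f₁ z :=
        (Filter.EventuallyEq.differentiableAt_iff heq).2 hgan.differentiableAt
      exact this.differentiableWithinAt
    · have : DifferentiableAt ℂ f₁ z := by
        have h1 : DifferentiableAt ℂ (fun z => f z / (z - z₀)^m) z := by
          apply DifferentiableAt.div
          · exact hd.differentiableAt (isOpen_ball.mem_nhds hz)
          · exact (differentiableAt_id.sub (differentiableAt_const _)).pow m
          · exact pow_ne_zero m (sub_ne_zero.2 h)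
        apply h1.congr_of_eventuallyEq
        filter_upwards [isOpen_ne.mem_nhds (show z ∈ {w : ℂ | w ≠ z₀} from h)] with w hw
        simp [hf₁, if_neg hw]
      exact this.differentiableWithinAt
  · simpa [hf₁] using hgz₀
  · intro z hz
    by_cases h : z = z₀
    · subst h
      have h0 := heq.self_of_nhds
      have h1 := hglocal.self_of_nhds
      rw [h1, h0]
      simp
    · rw [hf₁]
      simp only [if_neg h]
      field_simp [pow_ne_zero m (sub_ne_zero.2 h)]
  · intro z h
    rw [hf₁]
    simp [if_neg h]
  · intro hfz₀
    by_contra hm1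
    push_neg at hm1
    interval_cases m
    have h1 := hglocal.self_of_nhds
    simp at h1
    rw [h1] at hfz₀
    exact hgz₀ hfz₀

lemma circle_log_integral {r : ℝ} (hr : 0 < r) {z₀ : ℂ} (hz₀ : z₀ ≠ 0)
    (hz₀r : ‖z₀‖ < r) :
    ∫ θ in (0:ℝ)..(2*Real.pi), Real.log (‖(r:ℂ)*Complex.exp (θ*Complex.I) - z₀‖)
      = 2*Real.pi*Real.log r := by
  set F : ℂ → ℂ := fun z => (r:ℂ) - (starRingEnd ℂ) z₀ * z with hF
  have habs0 : 0 < ‖z₀‖ := norm_pos_iff.mpr hz₀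
  have hR1 : 1 < r / ‖z₀‖ := (one_lt_div habs0).2 hz₀r
  have hnz : ∀ z ∈ closedBall (0:ℂ) 1, F z ≠ 0 := by
    intro z hz hFz
    rw [hF] at hFz
    have h1 : (starRingEnd ℂ) z₀ * z = (r:ℂ) := by
      have := sub_eq_zero.1 hFz
      linear_combination -this
    have h2 : ‖z₀‖ * ‖z‖ = r := by
      have := congrArg norm h1
      simpa [norm_mul, Complex.norm_real, Real.norm_eq_abs, _root_.abs_of_nonneg hr.le] using this
    have h3 : ‖z‖ ≤ 1 := by simpa [Complex.dist_eq] using hz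
    nlinarith
  have hmv := mvlog (f := F) (R := r / ‖z₀‖) (s := 1)
    ((Differentiable.differentiableOn (by fun_prop))) one_pos hR1 hnz
  have hcongr : ∀ θ : ℝ, ‖F (((1:ℝ):ℂ) * Complex.exp (θ*Complex.I))‖
      = ‖(r:ℂ)*Complex.exp (θ*Complex.I) - z₀‖ := by
    intro θ
    set e : ℂ := Complex.exp (θ*Complex.I) with he
    have habse : ‖e‖ = 1 := Complex.norm_exp_ofReal_mul_I θ
    have hee : e * (starRingEnd ℂ) e = 1 := by
      rw [Complex.mul_conj]
      rw [Complex.normSq_eq_norm_sq, habse]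
      norm_num
    have h2 : ((r:ℂ)*e - z₀) * (starRingEnd ℂ) e = (r:ℂ) - z₀ * (starRingEnd ℂ) e := by
      linear_combination (r:ℂ) * hee
    have h3 : F (((1:ℝ):ℂ) * e) = (starRingEnd ℂ) (((r:ℂ)*e - z₀) * (starRingEnd ℂ) e) := by
      rw [h2, hF]
      simp only [map_sub, map_mul, Complex.conj_conj, Complex.conj_ofReal]
      push_cast
      ring
    rw [h3, Complex.norm_conj, norm_mul, Complex.norm_conj, habse, mul_one]
  calc ∫ θ in (0:ℝ)..(2*Real.pi), Real.log (‖(r:ℂ)*Complex.exp (θ*Complex.I) - z₀‖)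
      = ∫ θ in (0:ℝ)..(2*Real.pi), Real.log (‖F (((1:ℝ):ℂ) * Complex.exp (θ*Complex.I))‖) :=
        intervalIntegral.integral_congr (fun θ _ => by rw [hcongr θ])
    _ = 2*Real.pi*Real.log (‖F 0‖) := hmv
    _ = 2*Real.pi*Real.log r := by
        rw [hF]
        simp [Complex.norm_real, Real.norm_eq_abs, _root_.abs_of_nonneg hr.le]

lemma jensen {r : ℝ} (hr0 : 0 < r) (hr1 : r < 1) :
    ∀ (f : ℂ → ℂ), DifferentiableOn ℂ f (ball 0 1) → f 0 ≠ 0 →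
    (∀ z ∈ sphere (0:ℂ) r, f z ≠ 0) →
    2*Real.pi*Real.log (‖f 0‖)
      ≤ ∫ θ in (0:ℝ)..(2*Real.pi), Real.log (‖f ((r:ℂ)*Complex.exp (θ*Complex.I))‖) := by
  have hmemball : ∀ θ : ℝ, ((r:ℂ)*Complex.exp (θ*Complex.I)) ∈ ball (0:ℂ) 1 := by
    intro θ
    simp only [mem_ball, Complex.dist_eq, sub_zero, abs_mul_exp]
    rwa [_root_.abs_of_nonneg hr0.le]
  have hmemsph : ∀ θ : ℝ, ((r:ℂ)*Complex.exp (θ*Complex.I)) ∈ sphere (0:ℂ) r := by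
    intro θ
    simp only [mem_sphere_iff_norm, sub_zero, abs_mul_exp]
    exact _root_.abs_of_nonneg hr0.le
  suffices H : ∀ (n : ℕ) (f : ℂ → ℂ), DifferentiableOn ℂ f (ball 0 1) → f 0 ≠ 0 →
      (∀ z ∈ sphere (0:ℂ) r, f z ≠ 0) → ({z ∈ closedBall (0:ℂ) r | f z = 0}).ncard ≤ n →
      2*Real.pi*Real.log (‖f 0‖)
        ≤ ∫ θ in (0:ℝ)..(2*Real.pi), Real.log (‖f ((r:ℂ)*Complex.exp (θ*Complex.I))‖) by
    intro f hd hf0 hnz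
    exact H _ f hd hf0 hnz le_rfl
  intro n
  induction n with
  | zero =>
    intro f hd hf0 hnz hcard
    have hfin := zeros_finite hd hf0 hr1
    have hempty : {z ∈ closedBall (0:ℂ) r | f z = 0} = ∅ :=
      (Set.ncard_eq_zero hfin).1 (Nat.le_zero.1 hcard)
    have hnz' : ∀ z ∈ closedBall (0:ℂ) r, f z ≠ 0 := by
      intro z hz hfz
      exact absurd (Set.eq_empty_iff_forall_notMem.1 hempty z ⟨hz, hfz⟩) (fun h => h)
    exact le_of_eq (mvlog hd hr0 hr1 hnz').symm
  | succ n IH =>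
    intro f hd hf0 hnz hcard
    by_cases hempty : {z ∈ closedBall (0:ℂ) r | f z = 0} = ∅
    · have hnz' : ∀ z ∈ closedBall (0:ℂ) r, f z ≠ 0 := by
        intro z hz hfz
        exact absurd (Set.eq_empty_iff_forall_notMem.1 hempty z ⟨hz, hfz⟩) (fun h => h)
      exact le_of_eq (mvlog hd hr0 hr1 hnz').symm
    · obtain ⟨z₀, hz₀cb, hz₀z⟩ := Set.nonempty_iff_ne_empty.2 hempty
      have hz₀abs : ‖z₀‖ ≤ r := by simpa [Complex.dist_eq] using hz₀cb
      have hz₀ne : ‖z₀‖ ≠ r := by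
        intro h
        apply hnz z₀ _ hz₀z
        simp [mem_sphere_iff_norm, h]
      have hz₀lt : ‖z₀‖ < r := lt_of_le_of_ne hz₀abs hz₀ne
      have hz₀ball : z₀ ∈ ball (0:ℂ) 1 := by
        simp only [mem_ball, Complex.dist_eq, sub_zero]
        linarith
      have hz₀0 : z₀ ≠ 0 := by
        intro h
        rw [h] at hz₀z
        exact hf0 hz₀z
      obtain ⟨m, f₁, hd₁, hf₁z₀, hfactor, hquot, hm1⟩ :=
        factor_zero hd (mem_ball_self one_pos) hf0 hz₀ball
      have hfac0 : f 0 = (0 - z₀)^m * f₁ 0 := hfactor 0 (mem_ball_self one_pos)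
      have hf₁0 : f₁ 0 ≠ 0 := by
        intro h
        rw [h, mul_zero] at hfac0
        exact hf0 hfac0
      have habsz₀ : (0:ℝ) < ‖z₀‖ := norm_pos_iff.mpr hz₀0
      have hlogf₁0 : Real.log (‖f₁ 0‖)
          = Real.log (‖f 0‖) - m * Real.log (‖z₀‖) := by
        have : ‖f 0‖ = ‖z₀‖ ^ m * ‖f₁ 0‖ := by
          rw [hfac0, norm_mul, norm_pow]
          simp
        rw [this, Real.log_mul (pow_ne_zero m habsz₀.ne') (norm_ne_zero_iff.mpr hf₁0),
          Real.log_pow]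
        push_cast
        ring
      have hnz₁ : ∀ z ∈ sphere (0:ℂ) r, f₁ z ≠ 0 := by
        intro z hz hf₁z
        have hzz₀ : z ≠ z₀ := by
          intro h
          apply hz₀ne
          rw [← h]
          simpa [mem_sphere_iff_norm] using hz
        have hzball : z ∈ ball (0:ℂ) 1 := by
          have : ‖z‖ = r := by simpa [mem_sphere_iff_norm] using hz
          simp only [mem_ball, Complex.dist_eq, sub_zero]
          rw [this]; exact hr1
        have := hfactor z hzball
        rw [hf₁z, mul_zero] at this
        exact hnz z hz this
      have hZeq : {z ∈ closedBall (0:ℂ) r | f₁ z = 0} = {z ∈ closedBall (0:ℂ) r | f z = 0} \ {z₀} := by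
        ext z
        simp only [Set.mem_setOf_eq, Set.mem_diff, Set.mem_singleton_iff]
        constructor
        · rintro ⟨hz, hfz⟩
          have hzz₀ : z ≠ z₀ := by
            intro h
            rw [h] at hfz
            exact hf₁z₀ hfz
          have hzball : z ∈ ball (0:ℂ) 1 := (closedBall_subset_ball hr1) hz
          refine ⟨⟨hz, ?_⟩, hzz₀⟩
          rw [hfactor z hzball, hfz, mul_zero]
        · rintro ⟨⟨hz, hfz⟩, hzz₀⟩
          refine ⟨hz, ?_⟩
          have hzball : z ∈ ball (0:ℂ) 1 := (closedBall_subset_ball hr1) hz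
          have := hfactor z hzball
          rw [hfz] at this
          exact (mul_eq_zero.1 this.symm).resolve_left (pow_ne_zero m (sub_ne_zero.2 hzz₀))
      have hcard₁ : ({z ∈ closedBall (0:ℂ) r | f₁ z = 0}).ncard ≤ n := by
        rw [hZeq]
        have hfin := zeros_finite hd hf0 hr1
        have hz₀mem : z₀ ∈ {z | z ∈ closedBall (0:ℂ) r ∧ f z = 0} := ⟨hz₀cb, hz₀z⟩
        have := Set.ncard_diff_singleton_lt_of_mem hz₀mem hfin
        omega
      have hIH := IH f₁ hd₁ hf₁0 hnz₁ hcard₁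
      -- decompose the integral
      have hdecomp : ∀ θ : ℝ,
          Real.log (‖f ((r:ℂ)*Complex.exp (θ*Complex.I))‖)
          = Real.log (‖f₁ ((r:ℂ)*Complex.exp (θ*Complex.I))‖)
            + (m:ℝ) * Real.log (‖(r:ℂ)*Complex.exp (θ*Complex.I) - z₀‖) := by
        intro θ
        set z : ℂ := (r:ℂ)*Complex.exp (θ*Complex.I) with hzdef
        have hzz₀ : z ≠ z₀ := by
          intro h
          apply hz₀ne
          rw [← h, hzdef, abs_mul_exp, _root_.abs_of_nonneg hr0.le]
        have h1 : ‖f z‖ = ‖z - z₀‖ ^ m * ‖f₁ z‖ := by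
          rw [hfactor z (hmemball θ), norm_mul, norm_pow]
        have hf₁ne : f₁ z ≠ 0 := hnz₁ z (hmemsph θ) 
        rw [h1, Real.log_mul (pow_ne_zero m (norm_ne_zero_iff.mpr (sub_ne_zero.2 hzz₀)))
          (norm_ne_zero_iff.mpr hf₁ne), Real.log_pow]
        ring
      have hcont₁ : Continuous (fun θ : ℝ => Real.log (‖f₁ ((r:ℂ)*Complex.exp (θ*Complex.I))‖)) := by
        apply Continuous.log
        · apply continuous_norm.comp
          apply ContinuousOn.comp_continuous hd₁.continuousOn
          · exact continuous_const.mul (Complex.continuous_exp.comp (Complex.continuous_ofReal.mul continuous_const))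
          · exact hmemball
        · intro θ
          exact norm_ne_zero_iff.mpr (hnz₁ _ (hmemsph θ))
      have hcont₂ : Continuous (fun θ : ℝ => (m:ℝ) * Real.log (‖(r:ℂ)*Complex.exp (θ*Complex.I) - z₀‖)) := by
        apply continuous_const.mul
        apply Continuous.log
        · apply continuous_norm.comp
          exact (continuous_const.mul (Complex.continuous_exp.comp (Complex.continuous_ofReal.mul continuous_const))).sub continuous_const
        · intro θ
          apply norm_ne_zero_iff.mpr
          apply sub_ne_zero.2
          intro h
          apply hz₀ne
          rw [← h, abs_mul_exp, _root_.abs_of_nonneg hr0.le]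
      have hIsplit : (∫ θ in (0:ℝ)..(2*Real.pi), Real.log (‖f ((r:ℂ)*Complex.exp (θ*Complex.I))‖))
          = (∫ θ in (0:ℝ)..(2*Real.pi), Real.log (‖f₁ ((r:ℂ)*Complex.exp (θ*Complex.I))‖))
            + (m:ℝ) * ∫ θ in (0:ℝ)..(2*Real.pi), Real.log (‖(r:ℂ)*Complex.exp (θ*Complex.I) - z₀‖) := by
        rw [← intervalIntegral.integral_const_mul, ← intervalIntegral.integral_add
          (hcont₁.intervalIntegrable 0 (2*Real.pi)) (hcont₂.intervalIntegrable 0 (2*Real.pi))]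
        exact intervalIntegral.integral_congr (fun θ _ => hdecomp θ)
      rw [hIsplit, circle_log_integral hr0 hz₀0 hz₀lt]
      rw [hlogf₁0] at hIH
      have hlogle : Real.log (‖z₀‖) ≤ Real.log r := Real.log_le_log habsz₀ hz₀lt.le
      have hmnn : (0:ℝ) ≤ (m:ℝ) * (Real.log r - Real.log (‖z₀‖)) :=
        mul_nonneg (Nat.cast_nonneg m) (by linarith)
      have hmnn2 : (0:ℝ) ≤ 2*Real.pi*((m:ℝ) * (Real.log r - Real.log (‖z₀‖))) :=
        mul_nonneg (by positivity) hmnn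
      nlinarith [hIH, hmnn2]

/-- Privalov-type uniqueness: a bounded analytic function on the disc whose radial limits
vanish on a set of positive measure vanishes at the origin. -/
lemma privalov {f : ℂ → ℂ} {M : ℝ} (hd : DifferentiableOn ℂ f (ball 0 1))
    (hb : ∀ z ∈ ball (0:ℂ) 1, ‖f z‖ ≤ M) {E : Set ℝ} (hEm : MeasurableSet E)
    (hEsub : E ⊆ Ico 0 (2*Real.pi)) (hE0 : volume E ≠ 0)
    (hlim : ∀ᵐ θ : ℝ ∂(volume.restrict E),
      Tendsto (fun r : ℝ => f ((r:ℂ) * Complex.exp (θ*Complex.I))) (𝓝[<] (1:ℝ)) (𝓝 0)) :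
    f 0 = 0 := by
  by_contra hf0
  have hπ : 0 < Real.pi := Real.pi_pos
  have hM0 : 0 < M := lt_of_lt_of_le (norm_pos_iff.mpr hf0) (hb 0 (mem_ball_self one_pos))
  have hEfin : volume E ≠ ⊤ := by
    refine ne_top_of_le_ne_top ?_ (measure_mono hEsub)
    simp [Real.volume_Ico, ENNReal.mul_eq_top]
  set μE : ℝ := (volume E).toReal with hμE
  have hμE0 : 0 < μE := ENNReal.toReal_pos hE0 hEfin
  have hμE2π : μE ≤ 2*Real.pi := by
    have h1 : volume E ≤ ENNReal.ofReal (2*Real.pi) := by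
      have := measure_mono (μ := volume) hEsub
      rwa [Real.volume_Ico, sub_zero] at this
    calc μE ≤ (ENNReal.ofReal (2*Real.pi)).toReal := ENNReal.toReal_mono (by simp [ENNReal.mul_eq_top]) h1
      _ = 2*Real.pi := ENNReal.toReal_ofReal (by positivity)
  -- select good radii
  have hradii : ∀ j : ℕ, ∃ t : ℝ,
      (1 - 1/((j:ℝ)+2) < t ∧ t < 1 - 1/(2*((j:ℝ)+2))) ∧ ∀ z ∈ sphere (0:ℂ) t, f z ≠ 0 := by
    intro j
    have hj2 : (0:ℝ) < (j:ℝ)+2 := by positivity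
    have hfrac : 1/(2*((j:ℝ)+2)) < 1/((j:ℝ)+2) := by
      apply one_div_lt_one_div_of_lt hj2
      linarith
    have hab : 1 - 1/((j:ℝ)+2) < 1 - 1/(2*((j:ℝ)+2)) := by linarith
    set b : ℝ := 1 - 1/(2*((j:ℝ)+2)) with hbdef
    have hbpos : 0 < 1/(2*((j:ℝ)+2)) := by positivity
    have hb1 : b < 1 := by rw [hbdef]; linarith
    have hfin := zeros_finite hd hf0 hb1
    have himg : (norm '' {z ∈ closedBall (0:ℂ) b | f z = 0}).Finite := hfin.image _
    have hIoo : (Ioo (1 - 1/((j:ℝ)+2)) b).Infinite := Set.Ioo_infinite hab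
    obtain ⟨t, ht⟩ := (hIoo.diff himg).nonempty
    refine ⟨t, ⟨ht.1.1, ht.1.2⟩, ?_⟩
    intro z hz hfz
    apply ht.2
    have habsz : ‖z‖ = t := by
      simpa [mem_sphere_iff_norm] using hz
    refine ⟨z, ⟨?_, hfz⟩, habsz⟩
    simp only [mem_closedBall, Complex.dist_eq, sub_zero]
    rw [habsz]
    exact le_of_lt ht.1.2
  choose rr hrmem hrnz using hradii
  have hrlb : ∀ j, (1:ℝ)/2 ≤ rr j := by
    intro j
    have h1 := (hrmem j).1
    have hj2 : (2:ℝ) ≤ (j:ℝ)+2 := by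
      have : (0:ℝ) ≤ (j:ℝ) := Nat.cast_nonneg j
      linarith
    have : 1/((j:ℝ)+2) ≤ 1/2 := by
      apply one_div_le_one_div_of_le two_pos hj2
    linarith
  have hr0 : ∀ j, (0:ℝ) < rr j := fun j => lt_of_lt_of_le one_half_pos (hrlb j)
  have hrub : ∀ j, rr j < 1 := by
    intro j
    have h1 := (hrmem j).2
    have : (0:ℝ) < 1/(2*((j:ℝ)+2)) := by positivity
    linarith
  have hrtend : Tendsto rr atTop (𝓝[<] (1:ℝ)) := by
    have hinv : Tendsto (fun j : ℕ => 1/((j:ℝ)+2)) atTop (𝓝 0) := by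
      have h1 : Tendsto (fun j : ℕ => ((j:ℝ)+2)) atTop atTop :=
        tendsto_atTop_add_const_right atTop 2 tendsto_natCast_atTop_atTop
      simpa [one_div, Pi.inv_def] using h1.inv_tendsto_atTop
    have hlow : Tendsto (fun j : ℕ => 1 - 1/((j:ℝ)+2)) atTop (𝓝 1) := by
      have h4 : Tendsto (fun j : ℕ => 1 - 1/((j:ℝ)+2)) atTop (𝓝 (1 - 0)) :=
        Tendsto.sub tendsto_const_nhds hinv
      simpa using h4
    have hup : Tendsto (fun j : ℕ => 1 - 1/(2*((j:ℝ)+2))) atTop (𝓝 1) := by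
      have h2 : Tendsto (fun j : ℕ => (1/2) * (1/((j:ℝ)+2))) atTop (𝓝 0) := by
        simpa using hinv.const_mul (1/2:ℝ)
      have h3 : (fun j : ℕ => 1 - 1/(2*((j:ℝ)+2))) = fun j : ℕ => 1 - (1/2)*(1/((j:ℝ)+2)) := by
        funext j
        rw [one_div, one_div, one_div, mul_inv]
      rw [h3]
      have h5 : Tendsto (fun j : ℕ => 1 - (1/2)*(1/((j:ℝ)+2))) atTop (𝓝 (1 - 0)) :=
        Tendsto.sub tendsto_const_nhds h2
      simpa using h5
    have htendsto : Tendsto rr atTop (𝓝 1) :=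
      tendsto_of_tendsto_of_tendsto_of_le_of_le hlow hup
        (fun j => (hrmem j).1.le) (fun j => (hrmem j).2.le)
    exact tendsto_nhdsWithin_of_tendsto_nhds_of_eventually_within rr htendsto
      (Filter.Eventually.of_forall hrub)
  -- membership facts
  have hmemball : ∀ (j : ℕ) (θ : ℝ), ((rr j : ℂ) * Complex.exp (θ*Complex.I)) ∈ ball (0:ℂ) 1 := by
    intro j θ
    simp only [mem_ball, Complex.dist_eq, sub_zero, abs_mul_exp]
    rw [_root_.abs_of_nonneg (hr0 j).le]
    exact hrub j
  have hmemsph : ∀ (j : ℕ) (θ : ℝ), ((rr j : ℂ) * Complex.exp (θ*Complex.I)) ∈ sphere (0:ℂ) (rr j) := by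
    intro j θ
    simp only [mem_sphere_iff_norm, sub_zero, abs_mul_exp]
    exact _root_.abs_of_nonneg (hr0 j).le
  set u : ℕ → ℝ → ℝ :=
    fun j θ => Real.log (‖f ((rr j : ℂ) * Complex.exp (θ*Complex.I))‖) with hu
  have hucont : ∀ j, Continuous (u j) := by
    intro j
    apply Continuous.log
    · apply continuous_norm.comp
      apply ContinuousOn.comp_continuous hd.continuousOn
      · exact continuous_const.mul (Complex.continuous_exp.comp (Complex.continuous_ofReal.mul continuous_const))
      · exact hmemball j
    · intro θ
      exact norm_ne_zero_iff.mpr (hrnz j _ (hmemsph j θ))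
  have hjensen : ∀ j, 2*Real.pi*Real.log (‖f 0‖) ≤ ∫ θ in (0:ℝ)..(2*Real.pi), u j θ :=
    fun j => jensen (hr0 j) (hrub j) f hd hf0 (hrnz j)
  set C : ℝ := max (Real.log M) 0 with hC
  have hC0 : 0 ≤ C := le_max_right _ _
  have hub : ∀ j θ, u j θ ≤ C := by
    intro j θ
    have h1 : ‖f ((rr j : ℂ) * Complex.exp (θ*Complex.I))‖ ≤ M := hb _ (hmemball j θ)
    have h2 : 0 < ‖f ((rr j : ℂ) * Complex.exp (θ*Complex.I))‖ :=
      norm_pos_iff.mpr (hrnz j _ (hmemsph j θ))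
    exact le_trans (Real.log_le_log h2 h1) (le_max_left _ _)
  set E' : Set ℝ := E ∩ Ioc 0 (2*Real.pi) with hE'
  have hE'm : MeasurableSet E' := hEm.inter measurableSet_Ioc
  have hE'sub : E' ⊆ Ioc 0 (2*Real.pi) := inter_subset_right
  have hE'vol : volume E' = volume E := by
    apply le_antisymm (measure_mono inter_subset_left)
    have hsub2 : E ⊆ E' ∪ {0} := by
      intro x hx
      rcases eq_or_ne x 0 with h|h
      · right; simp [h]
      · left
        exact ⟨hx, ⟨lt_of_le_of_ne (hEsub hx).1 (Ne.symm h), le_of_lt (hEsub hx).2⟩⟩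
    calc volume E ≤ volume (E' ∪ {0}) := measure_mono hsub2
      _ ≤ volume E' + volume ({0} : Set ℝ) := measure_union_le _ _
      _ = volume E' := by simp
  have hE'fin : volume E' ≠ ⊤ := by rw [hE'vol]; exact hEfin
  have hE'tor : (volume E').toReal = μE := by rw [hE'vol]
  have hlim' : ∀ᵐ θ : ℝ ∂(volume.restrict E'),
      Tendsto (fun r : ℝ => f ((r:ℂ) * Complex.exp (θ*Complex.I))) (𝓝[<] (1:ℝ)) (𝓝 0) := by
    exact ae_restrict_of_ae_restrict_of_subset inter_subset_left hlim
  -- the key estimate for each truncation level T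
  have hmain : ∀ T : ℝ, 0 < T →
      2*Real.pi*Real.log (‖f 0‖) ≤ -T*μE + 2*Real.pi*C := by
    intro T hT
    set v : ℕ → ℝ → ℝ := fun j θ => max (u j θ) (-T) with hv
    have hvcont : ∀ j, Continuous (v j) := fun j => (hucont j).max continuous_const
    have hvub : ∀ j θ, v j θ ≤ C := fun j θ => max_le (hub j θ) (by linarith)
    have hvlb : ∀ j θ, -T ≤ v j θ := fun j θ => le_max_right _ _
    have hIocfin : volume (Ioc (0:ℝ) (2*Real.pi)) ≠ ⊤ := by simp [Real.volume_Ioc, ENNReal.mul_eq_top]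
    have hvint : ∀ (j : ℕ) (s : Set ℝ), MeasurableSet s → s ⊆ Ioc 0 (2*Real.pi) → IntegrableOn (v j) s := by
      intro j s hs hssub
      apply (Continuous.integrableOn_Ioc (hvcont j)).mono_set hssub
    have hsplit : ∀ j, (∫ θ in (0:ℝ)..(2*Real.pi), u j θ)
        ≤ (∫ θ in E', v j θ) + (2*Real.pi - μE) * C := by
      intro j
      have huint : IntegrableOn (u j) (Ioc 0 (2*Real.pi)) := Continuous.integrableOn_Ioc (hucont j)
      have hvint' : IntegrableOn (v j) (Ioc 0 (2*Real.pi)) := Continuous.integrableOn_Ioc (hvcont j)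
      have h1 : (∫ θ in (0:ℝ)..(2*Real.pi), u j θ) = ∫ θ in Ioc (0:ℝ) (2*Real.pi), u j θ :=
        intervalIntegral.integral_of_le (by positivity)
      have h2 : (∫ θ in Ioc (0:ℝ) (2*Real.pi), u j θ) ≤ ∫ θ in Ioc (0:ℝ) (2*Real.pi), v j θ :=
        setIntegral_mono_on huint hvint' measurableSet_Ioc (fun θ _ => le_max_left _ _)
      have hunion : E' ∪ (Ioc (0:ℝ) (2*Real.pi) \ E') = Ioc (0:ℝ) (2*Real.pi) :=
        Set.union_diff_cancel hE'sub
      have h3 : (∫ θ in Ioc (0:ℝ) (2*Real.pi), v j θ)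
          = (∫ θ in E', v j θ) + ∫ θ in (Ioc (0:ℝ) (2*Real.pi) \ E'), v j θ := by
        have h3' := setIntegral_union (disjoint_sdiff_self_right) (measurableSet_Ioc.diff hE'm)
          (hvint j E' hE'm hE'sub) (hvint j _ (measurableSet_Ioc.diff hE'm) diff_subset)
        rwa [hunion] at h3'
      have hvol3 : (volume (Ioc (0:ℝ) (2*Real.pi) \ E')).toReal = 2*Real.pi - μE := by
        rw [measure_diff hE'sub hE'm.nullMeasurableSet hE'fin]
        rw [Real.volume_Ioc, sub_zero, hE'vol]
        rw [ENNReal.toReal_sub_of_le]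
        · rw [ENNReal.toReal_ofReal (by positivity)]
        · have := measure_mono (μ := volume) hEsub
          rwa [Real.volume_Ico, sub_zero] at this
        · simp [ENNReal.mul_eq_top]
      have h4 : (∫ θ in (Ioc (0:ℝ) (2*Real.pi) \ E'), v j θ) ≤ (2*Real.pi - μE) * C := by
        have := setIntegral_mono_on (hvint j _ (measurableSet_Ioc.diff hE'm) diff_subset)
          (integrableOn_const (lt_of_le_of_lt (measure_mono diff_subset) hIocfin.lt_top).ne)
          (measurableSet_Ioc.diff hE'm) (fun θ _ => hvub j θ)
        rw [setIntegral_const, smul_eq_mul, measureReal_def, hvol3] at this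
        exact this
      linarith
    have hbound : Integrable (fun _ : ℝ => max C T) (volume.restrict E') :=
      integrableOn_const (lt_of_le_of_lt (le_of_eq hE'vol) hEfin.lt_top).ne
    have hdct : Tendsto (fun j => ∫ θ in E', v j θ) atTop (𝓝 (∫ _ in E', (-T))) := by
      apply tendsto_integral_of_dominated_convergence (fun _ => max C T)
      · exact fun j => (hvcont j).aestronglyMeasurable
      · exact hbound
      · intro j
        apply Filter.Eventually.of_forall
        intro θ
        rw [Real.norm_eq_abs, abs_le]
        constructor
        · calc -(max C T) ≤ -T := by simp
            _ ≤ v j θ := hvlb j θ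
        · exact le_trans (hvub j θ) (le_max_left _ _)
      · filter_upwards [hlim'] with θ hθ
        have htz : Tendsto (fun j => f ((rr j : ℂ) * Complex.exp (θ*Complex.I))) atTop (𝓝 0) :=
          hθ.comp hrtend
        have habs : Tendsto (fun j => ‖f ((rr j : ℂ) * Complex.exp (θ*Complex.I))‖)
            atTop (𝓝 0) := by
          have := (continuous_norm.tendsto 0).comp htz
          simpa [Function.comp_def] using this
        have habs' : Tendsto (fun j => ‖f ((rr j : ℂ) * Complex.exp (θ*Complex.I))‖)
            atTop (𝓝[>] 0) := by
          apply tendsto_nhdsWithin_of_tendsto_nhds_of_eventually_within _ habs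
          apply Filter.Eventually.of_forall
          intro j
          exact norm_pos_iff.mpr (hrnz j _ (hmemsph j θ))
        have hlogtend : Tendsto (fun j => u j θ) atTop atBot :=
          Real.tendsto_log_nhdsGT_zero.comp habs'
        have hev : ∀ᶠ j in atTop, v j θ = -T := by
          filter_upwards [hlogtend.eventually_le_atBot (-T)] with j hj
          exact max_eq_right hj
        exact Tendsto.congr' (by filter_upwards [hev] with j hj; rw [hj]) tendsto_const_nhds
    have hconst : (∫ _ in E', (-T : ℝ)) = -T * μE := by
      rw [setIntegral_const, smul_eq_mul, measureReal_def, hE'tor]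
      ring
    rw [hconst] at hdct
    have hle : ∀ j, 2*Real.pi*Real.log (‖f 0‖) - (2*Real.pi - μE)*C ≤ ∫ θ in E', v j θ := by
      intro j
      linarith [hjensen j, hsplit j]
    have hfinal : 2*Real.pi*Real.log (‖f 0‖) - (2*Real.pi - μE)*C ≤ -T*μE :=
      ge_of_tendsto hdct (Filter.Eventually.of_forall hle)
    nlinarith [hfinal, mul_nonneg hμE0.le hC0]
  -- contradiction
  set L : ℝ := Real.log (‖f 0‖) with hL
  have hLC : L ≤ C := le_trans (Real.log_le_log (norm_pos_iff.mpr hf0)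
    (hb 0 (mem_ball_self one_pos))) (le_max_left _ _)
  set T : ℝ := (2*Real.pi*C - 2*Real.pi*L + 1)/μE with hT
  have hTpos : 0 < T := by
    apply div_pos _ hμE0
    nlinarith [hπ]
  have hTμ : T * μE = 2*Real.pi*C - 2*Real.pi*L + 1 := div_mul_cancel₀ _ hμE0.ne'
  have h := hmain T hTpos
  nlinarith [h, hTμ]

lemma schur_bound : ∀ (N : ℕ) (f f' : ℂ → ℂ) (a : ℕ → ℂ),
    HasSchurParams f a → HasSchurParams f' a → ∀ z : ℂ, ‖z‖ ≤ 1/4 →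
    ‖f z - f' z‖ ≤ 2 * (4/9)^N := by
  intro N
  induction N with
  | zero =>
    intro f f' a hf hf' z hz
    obtain ⟨g, hg0, hgs, -, -⟩ := hf
    obtain ⟨g', hg0', hgs', -, -⟩ := hf'
    have hzb : z ∈ ball (0:ℂ) 1 := by
      simp only [mem_ball, Complex.dist_eq, sub_zero]
      linarith
    have h1 : ‖f z‖ ≤ 1 := by rw [← hg0]; exact (hgs 0).2 z hzb
    have h2 : ‖f' z‖ ≤ 1 := by rw [← hg0']; exact (hgs' 0).2 z hzb
    have h3 : ‖f z - f' z‖ ≤ ‖f z‖ + ‖f' z‖ :=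
      norm_sub_le _ _
    simpa using by linarith
  | succ N IH =>
    intro f f' a hf hf' z hz
    have hzb : z ∈ ball (0:ℂ) 1 := by
      simp only [mem_ball, Complex.dist_eq, sub_zero]
      linarith
    have h0b : (0:ℂ) ∈ ball (0:ℂ) 1 := mem_ball_self one_pos
    obtain ⟨g, hg0, hgs, hgv, hgr⟩ := hf
    obtain ⟨g', hg0', hgs', hgv', hgr'⟩ := hf'
    have ha0f : f 0 = a 0 := by rw [← hg0]; exact hgv 0
    have ha0f' : f' 0 = a 0 := by rw [← hg0']; exact hgv' 0
    by_cases hlt : ‖a 0‖ < 1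
    · -- the contraction step
      have hshift : HasSchurParams (g 1) (fun k => a (k+1)) :=
        ⟨fun n => g (n+1), rfl, fun n => hgs (n+1), fun n => hgv (n+1), fun n h => hgr (n+1) h⟩
      have hshift' : HasSchurParams (g' 1) (fun k => a (k+1)) :=
        ⟨fun n => g' (n+1), rfl, fun n => hgs' (n+1), fun n => hgv' (n+1), fun n h => hgr' (n+1) h⟩
      have hIH := IH (g 1) (g' 1) (fun k => a (k+1)) hshift hshift' z hz
      have hr1 : z * g 1 z * (1 - (starRingEnd ℂ) (a 0) * f z) = f z - a 0 := by
        rw [← hg0]; exact hgr 0 hlt z hzb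
      have hr1' : z * g' 1 z * (1 - (starRingEnd ℂ) (a 0) * f' z) = f' z - a 0 := by
        rw [← hg0']; exact hgr' 0 hlt z hzb
      set c : ℂ := (starRingEnd ℂ) (a 0) with hc
      set w : ℂ := z * g 1 z with hw
      set w' : ℂ := z * g' 1 z with hw'
      have hI1 : f z * (1 + c * w) = a 0 + w := by linear_combination -hr1
      have hI1' : f' z * (1 + c * w') = a 0 + w' := by linear_combination -hr1'
      have habsc : ‖c‖ ≤ 1 := by
        rw [hc, Complex.norm_conj]; exact hlt.le
      have habsw : ‖w‖ ≤ 1/4 := by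
        rw [hw, norm_mul]
        calc ‖z‖ * ‖g 1 z‖ ≤ (1/4) * 1 :=
          mul_le_mul hz ((hgs 1).2 z hzb) (norm_nonneg _) (by norm_num)
          _ = 1/4 := by norm_num
      have habsw' : ‖w'‖ ≤ 1/4 := by
        rw [hw', norm_mul]
        calc ‖z‖ * ‖g' 1 z‖ ≤ (1/4) * 1 :=
          mul_le_mul hz ((hgs' 1).2 z hzb) (norm_nonneg _) (by norm_num)
          _ = 1/4 := by norm_num
      have habscw : ‖c*w‖ ≤ 1/4 := by
        rw [norm_mul]
        calc ‖c‖ * ‖w‖ ≤ 1 * (1/4) :=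
          mul_le_mul habsc habsw (norm_nonneg _) (by norm_num)
          _ = 1/4 := by norm_num
      have habscw' : ‖c*w'‖ ≤ 1/4 := by
        rw [norm_mul]
        calc ‖c‖ * ‖w'‖ ≤ 1 * (1/4) :=
          mul_le_mul habsc habsw' (norm_nonneg _) (by norm_num)
          _ = 1/4 := by norm_num
      have hD : (3:ℝ)/4 ≤ ‖1 + c*w‖ := by
        have h1 : ‖(1 + c*w) - c*w‖ ≤ ‖1 + c*w‖ + ‖c*w‖ :=
          norm_sub_le _ _
        simp only [add_sub_cancel_right] at h1
        have : ‖(1:ℂ)‖ = 1 := by simp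
        rw [this] at h1
        linarith
      have hD' : (3:ℝ)/4 ≤ ‖1 + c*w'‖ := by
        have h1 : ‖(1 + c*w') - c*w'‖ ≤ ‖1 + c*w'‖ + ‖c*w'‖ :=
          norm_sub_le _ _
        simp only [add_sub_cancel_right] at h1
        have : ‖(1:ℂ)‖ = 1 := by simp
        rw [this] at h1
        linarith
      have hkey : (f z - f' z) * ((1 + c*w) * (1 + c*w')) = (w - w') * (1 - a 0 * c) := by
        linear_combination (1 + c*w') * hI1 - (1 + c*w) * hI1'
      have habseq : ‖f z - f' z‖ * (‖1 + c*w‖ * ‖1 + c*w'‖)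
          = ‖w - w'‖ * ‖1 - a 0 * c‖ := by
        rw [← norm_mul, ← norm_mul, ← norm_mul, hkey, norm_mul]
      have hbnd1 : ‖1 - a 0 * c‖ ≤ 1 := by
        rw [hc, Complex.mul_conj]
        have hns : Complex.normSq (a 0) ≤ 1 := by
          rw [Complex.normSq_eq_norm_sq]
          nlinarith [norm_nonneg (a 0)]
        have h2 : (1:ℂ) - (Complex.normSq (a 0) : ℂ) = ((1 - Complex.normSq (a 0) : ℝ) : ℂ) := by
          push_cast; ring
        rw [h2, Complex.norm_real, Real.norm_eq_abs, _root_.abs_of_nonneg (by linarith)]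
        linarith [Complex.normSq_nonneg (a 0)]
      have hbnd2 : ‖w - w'‖ ≤ (1/4) * (2*(4/9)^N) := by
        have hww : w - w' = z * (g 1 z - g' 1 z) := by rw [hw, hw']; ring
        rw [hww, norm_mul]
        exact mul_le_mul hz hIH (norm_nonneg _) (by norm_num)
      have hXP : ‖f z - f' z‖ * (‖1 + c*w‖ * ‖1 + c*w'‖)
          ≤ (1/4) * (2*(4/9)^N) * 1 := by
        rw [habseq]
        apply mul_le_mul hbnd2 hbnd1 (norm_nonneg _) (by positivity)
      have hP : (9:ℝ)/16 ≤ ‖1 + c*w‖ * ‖1 + c*w'‖ := by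
        nlinarith [norm_nonneg (1 + c*w), norm_nonneg (1 + c*w')]
      have hX0 : (0:ℝ) ≤ ‖f z - f' z‖ := norm_nonneg _
      have hmono : ‖f z - f' z‖ * (9/16)
          ≤ ‖f z - f' z‖ * (‖1 + c*w‖ * ‖1 + c*w'‖) :=
        mul_le_mul_of_nonneg_left hP hX0
      have hpow : (0:ℝ) ≤ (4/9:ℝ)^N := by positivity
      have hgoal : ‖f z - f' z‖ ≤ 2 * (4/9)^(N+1) := by
        rw [pow_succ]
        nlinarith
      exact hgoal
    · -- maximum modulus: both constant
      have hle : ‖a 0‖ ≤ 1 := by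
        have := (hgs 0).2 0 h0b
        rwa [hgv 0] at this
      have hdf : DifferentiableOn ℂ f (ball 0 1) := by rw [← hg0]; exact (hgs 0).1
      have hdf' : DifferentiableOn ℂ f' (ball 0 1) := by rw [← hg0']; exact (hgs' 0).1
      have hmax : IsMaxOn (norm ∘ f) (ball (0:ℂ) 1) 0 := by
        intro x hx
        simp only [Function.comp_apply, ha0f]
        calc ‖f x‖ ≤ 1 := by rw [← hg0]; exact (hgs 0).2 x hx
          _ ≤ ‖a 0‖ := not_lt.1 hlt
      have hmax' : IsMaxOn (norm ∘ f') (ball (0:ℂ) 1) 0 := by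
        intro x hx
        simp only [Function.comp_apply, ha0f']
        calc ‖f' x‖ ≤ 1 := by rw [← hg0']; exact (hgs' 0).2 x hx
          _ ≤ ‖a 0‖ := not_lt.1 hlt
      have hconst := Complex.eqOn_of_isPreconnected_of_isMaxOn_norm
        (convex_ball (0:ℂ) 1).isPreconnected isOpen_ball hdf h0b hmax
      have hconst' := Complex.eqOn_of_isPreconnected_of_isMaxOn_norm
        (convex_ball (0:ℂ) 1).isPreconnected isOpen_ball hdf' h0b hmax'
      have h1 := hconst hzb
      have h2 := hconst' hzb
      simp only [Function.const_apply] at h1 h2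
      rw [h1, h2, ha0f, ha0f', sub_self]
      simp
      positivity

lemma hasSchurParams_unique {f f' : ℂ → ℂ} {a : ℕ → ℂ} (hf : HasSchurParams f a)
    (hf' : HasSchurParams f' a) : EqOn f f' (ball (0:ℂ) 1) := by
  have hsmall : EqOn f f' (ball (0:ℂ) (1/4)) := by
    intro z hz
    have hz4 : ‖z‖ ≤ 1/4 := by
      have : ‖z‖ < 1/4 := by simpa [mem_ball, Complex.dist_eq] using hz
      linarith
    have hb : ∀ N : ℕ, ‖f z - f' z‖ ≤ 2*(4/9)^N :=
      fun N => schur_bound N f f' a hf hf' z hz4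
    have htend : Tendsto (fun N : ℕ => 2*(4/9 : ℝ)^N) atTop (𝓝 0) := by
      have h1 := tendsto_pow_atTop_nhds_zero_of_lt_one (by norm_num : (0:ℝ) ≤ 4/9)
        (by norm_num : (4/9:ℝ) < 1)
      simpa using h1.const_mul 2
    have h0 : ‖f z - f' z‖ ≤ 0 := ge_of_tendsto htend (Filter.Eventually.of_forall hb)
    have h1 : ‖f z - f' z‖ = 0 := le_antisymm h0 (norm_nonneg _)
    rw [norm_eq_zero, sub_eq_zero] at h1
    exact h1
  obtain ⟨g, hg0, hgs, -, -⟩ := hf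
  obtain ⟨g', hg0', hgs', -, -⟩ := hf'
  have hdf : DifferentiableOn ℂ f (ball 0 1) := by rw [← hg0]; exact (hgs 0).1
  have hdf' : DifferentiableOn ℂ f' (ball 0 1) := by rw [← hg0']; exact (hgs' 0).1
  apply AnalyticOnNhd.eqOn_of_preconnected_of_eventuallyEq (hdf.analyticOnNhd isOpen_ball)
    (hdf'.analyticOnNhd isOpen_ball) (convex_ball (0:ℂ) 1).isPreconnected (mem_ball_self one_pos)
  exact hsmall.eventuallyEq_of_mem (ball_mem_nhds 0 (by norm_num))


theorem statement11
    (α β : ℤ → ℂ) (hα : ∀ n, ‖α n‖ ≤ 1) (hβ : ∀ n, ‖β n‖ ≤ 1)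
    (fpα fmα fpβ fmβ : ℤ → ℂ → ℂ)
    (hfpα : ∀ n : ℤ, HasSchurParams (fpα n) (fun k : ℕ => α (n + k)))
    (hfmα : ∀ n : ℤ, HasSchurParams (fmα n) (fun k : ℕ => -(starRingEnd ℂ) (α (n - 1 - k))))
    (hfpβ : ∀ n : ℤ, HasSchurParams (fpβ n) (fun k : ℕ => β (n + k)))
    (hfmβ : ∀ n : ℤ, HasSchurParams (fmβ n) (fun k : ℕ => -(starRingEnd ℂ) (β (n - 1 - k))))
    (A : Set ℂ) (hA : MeasurableSet A) (hAsub : A ⊆ sphere (0:ℂ) 1)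
    (hApos : (volume : Measure ℝ) (circleSet A) ≠ 0)
    (hreflα : ∀ n : ℤ, ∀ᵐ θ : ℝ ∂((volume : Measure ℝ).restrict (circleSet A)),
      ∃ Lp Lm : ℂ,
        RadialLimit (fpα n) (Complex.exp (θ * Complex.I)) Lp ∧
        RadialLimit (fmα n) (Complex.exp (θ * Complex.I)) Lm ∧
        Complex.exp (θ * Complex.I) * Lp = (starRingEnd ℂ) Lm)
    (hreflβ : ∀ n : ℤ, ∀ᵐ θ : ℝ ∂((volume : Measure ℝ).restrict (circleSet A)),
      ∃ Lp Lm : ℂ,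
        RadialLimit (fpβ n) (Complex.exp (θ * Complex.I)) Lp ∧
        RadialLimit (fmβ n) (Complex.exp (θ * Complex.I)) Lm ∧
        Complex.exp (θ * Complex.I) * Lp = (starRingEnd ℂ) Lm)
    (hagree : ∀ n : ℤ, n < 0 → α n = β n) :
    ∀ n : ℤ, α n = β n := by
  have hEm : MeasurableSet (circleSet A) := by
    have h1 : Continuous (fun θ : ℝ => Complex.exp (θ * Complex.I)) :=
      Complex.continuous_exp.comp (Complex.continuous_ofReal.mul continuous_const)
    have h2 : circleSet A
        = Ico 0 (2*Real.pi) ∩ (fun θ : ℝ => Complex.exp (θ*Complex.I)) ⁻¹' A := rfl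
    rw [h2]
    exact measurableSet_Ico.inter (hA.preimage h1.measurable)
  have hEsub : circleSet A ⊆ Ico 0 (2*Real.pi) := fun θ hθ => hθ.1
  have hval : ∀ (f : ℂ → ℂ) (a : ℕ → ℂ), HasSchurParams f a → f 0 = a 0 := by
    rintro f a ⟨g, hg0, -, hv, -⟩
    rw [← hg0]; exact hv 0
  have hSch : ∀ (f : ℂ → ℂ) (a : ℕ → ℂ), HasSchurParams f a → IsSchur f := by
    rintro f a ⟨g, hg0, hs, -, -⟩
    rw [← hg0]; exact hs 0
  have step : ∀ n : ℤ, (∀ m : ℤ, m < n → α m = β m) → α n = β n := by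
    intro n hind
    have hparams : (fun k : ℕ => -(starRingEnd ℂ) (α (n - 1 - k)))
        = (fun k : ℕ => -(starRingEnd ℂ) (β (n - 1 - k))) := by
      funext k
      rw [hind (n - 1 - k) (by omega)]
    have hfm : EqOn (fmα n) (fmβ n) (ball (0:ℂ) 1) := by
      apply hasSchurParams_unique (hfmα n)
      rw [hparams]
      exact hfmβ n
    have hae : ∀ᵐ θ : ℝ ∂(volume.restrict (circleSet A)),
        Tendsto (fun r : ℝ => fpα n ((r:ℂ) * Complex.exp (θ*Complex.I))
          - fpβ n ((r:ℂ) * Complex.exp (θ*Complex.I))) (𝓝[<] (1:ℝ)) (𝓝 0) := by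
      filter_upwards [hreflα n, hreflβ n] with θ h1 h2
      obtain ⟨Lpa, Lma, hLpa, hLma, hrel_a⟩ := h1
      obtain ⟨Lpb, Lmb, hLpb, hLmb, hrel_b⟩ := h2
      have hev : (fun r : ℝ => fmα n ((r:ℂ) * Complex.exp (θ*Complex.I)))
          =ᶠ[𝓝[<] (1:ℝ)] (fun r : ℝ => fmβ n ((r:ℂ) * Complex.exp (θ*Complex.I))) := by
        have hIoo : Ioo (-1:ℝ) 1 ∈ 𝓝[<] (1:ℝ) := by
          rw [← Set.Ioi_inter_Iio]
          exact Filter.inter_mem (mem_nhdsWithin_of_mem_nhds (Ioi_mem_nhds (by norm_num)))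
            self_mem_nhdsWithin
        filter_upwards [hIoo] with r hr
        apply hfm
        simp only [mem_ball, Complex.dist_eq, sub_zero, abs_mul_exp]
        exact abs_lt.2 ⟨hr.1, hr.2⟩
      have hLmb' : Tendsto (fun r : ℝ => fmα n ((r:ℂ)*Complex.exp (θ*Complex.I)))
          (𝓝[<] (1:ℝ)) (𝓝 Lmb) := Tendsto.congr' hev.symm hLmb
      have hMeq : Lma = Lmb := tendsto_nhds_unique hLma hLmb'
      have hPeq : Lpa = Lpb := by
        have h3 : Complex.exp (θ*Complex.I) * Lpa = Complex.exp (θ*Complex.I) * Lpb := by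
          rw [hrel_a, hrel_b, hMeq]
        exact mul_left_cancel₀ (Complex.exp_ne_zero _) h3
      have h4 : Tendsto (fun r : ℝ => fpα n ((r:ℂ) * Complex.exp (θ*Complex.I))
          - fpβ n ((r:ℂ) * Complex.exp (θ*Complex.I))) (𝓝[<] (1:ℝ)) (𝓝 (Lpa - Lpb)) :=
        Tendsto.sub hLpa hLpb
      rw [hPeq, sub_self] at h4
      exact h4
    have hdiff0 : fpα n 0 - fpβ n 0 = 0 := by
      have hSa := hSch _ _ (hfpα n)
      have hSb := hSch _ _ (hfpβ n)
      apply privalov (M := 2) (hSa.1.sub hSb.1) _ hEm hEsub hApos hae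
      intro z hz
      calc ‖fpα n z - fpβ n z‖
          ≤ ‖fpα n z‖ + ‖fpβ n z‖ := norm_sub_le _ _
        _ ≤ 1 + 1 := add_le_add (hSa.2 z hz) (hSb.2 z hz)
        _ = 2 := by norm_num
    have e1 : fpα n 0 = α n := by
      have := hval _ _ (hfpα n)
      simpa using this
    have e2 : fpβ n 0 = β n := by
      have := hval _ _ (hfpβ n)
      simpa using this
    rw [e1, e2, sub_eq_zero] at hdiff0
    exact hdiff0
  intro n
  rcases lt_or_ge n 0 with h|h
  · exact hagree n h
  · suffices H : ∀ k : ℕ, ∀ m : ℤ, m = (k:ℤ) → α m = β m by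
      exact H n.toNat n (by omega)
    intro k
    induction k using Nat.strong_induction_on with
    | _ k IH =>
      intro m hm
      apply step
      intro m' hm'
      rcases lt_or_ge m' 0 with h'|h'
      · exact hagree m' h'
      · exact IH m'.toNat (by omega) m' (by omega)

end
end

section
/- (Characterization of the Simon class.) Let (a_n)_{n∈ℤ} with a_n ≥ 0 and (b_n)_{n∈ℤ} ⊆ ℝ be bounded sequences and let H be the associated whole-line Jacobi matrix on ℓ²(ℤ, ℂ). Then the following are equivalent: (i) for every z ∈ ℂ with Im z ≠ 0, the map n ↦ ⟨δ_n, (H − z)⁻¹ δ_n⟩ is constant in n ∈ ℤ (equivalently, all spectral measures μ_n of H and δ_n coincide); (ii) ⟨δ_n, H δ_n⟩ and ⟨δ_n, H² δ_n⟩ are constant in n ∈ ℤ; (iii) there exist a, c ≥ 0 and b ∈ ℝ such that a_{2n} = a, a_{2n+1} = c, and b_n = b for all n ∈ ℤ. -/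
open MeasureTheory Filter Metric Complex Set Topology

noncomputable section

/-- `ℓ²(ℤ, ℂ)`. -/
abbrev ZSeq := lp (fun _ : ℤ => ℂ) 2

/-- The standard orthonormal basis vector `δ_n` of `ℓ²(ℤ, ℂ)`. -/
def deltaZ (n : ℤ) : ZSeq := lp.single 2 n (1 : ℂ)

namespace S15

local notation "⟪" x ", " y "⟫" => @inner ℂ _ _ x y

lemma coord (x : ZSeq) (m : ℤ) : ⟪deltaZ m, x⟫ = x m := by
  rw [deltaZ, lp.inner_single_left]
  simp

lemma applyD_eq (A B : ZSeq →L[ℂ] ZSeq)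
    (h : ∀ q : ℤ, A (deltaZ q) = B (deltaZ q)) : A = B := by
  refine ContinuousLinearMap.ext fun x => ?_
  have hs := lp.hasSum_single (E := fun _ : ℤ => ℂ) (p := 2) (by norm_num) x
  have hsingle : ∀ (i : ℤ) (c : ℂ), lp.single 2 i c = c • deltaZ i := by
    intro i c
    rw [deltaZ, ← lp.single_smul, smul_eq_mul, mul_one]
  have hfun : (fun i : ℤ => A (lp.single 2 i (x i))) = fun i => B (lp.single 2 i (x i)) := by
    funext i; rw [hsingle, A.map_smul, B.map_smul, h]
  exact (hs.mapL A).unique (by rw [hfun]; exact hs.mapL B)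

lemma matrix_ext {A B : ZSeq →L[ℂ] ZSeq}
    (h : ∀ p q : ℤ, ⟪deltaZ p, A (deltaZ q)⟫ = ⟪deltaZ p, B (deltaZ q)⟫) : A = B := by
  refine applyD_eq A B fun q => ?_
  apply lp.ext; funext m
  have := h m q
  rwa [coord, coord] at this

def rEquiv (k : ℤ) : ℤ ≃ ℤ where
  toFun n := 2*k+1-n
  invFun n := 2*k+1-n
  left_inv n := by ring
  right_inv n := by ring

lemma memℓp_refl (k : ℤ) (x : ZSeq) : Memℓp (fun n : ℤ => x (2*k+1-n)) 2 := by
  have h := lp.memℓp x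
  rw [memℓp_gen_iff (by norm_num)] at h ⊢
  exact ((rEquiv k).summable_iff
    (f := fun m : ℤ => ‖x m‖ ^ (2 : ENNReal).toReal)).mpr h

def reflLM (k : ℤ) : ZSeq →ₗ[ℂ] ZSeq where
  toFun x := ⟨fun n => x (2*k+1-n), memℓp_refl k x⟩
  map_add' x y := by
    apply lp.ext; funext n
    show (x + y) (2*k+1-n) = _
    simp [lp.coeFn_add]
    rfl
  map_smul' c x := by
    apply lp.ext; funext n
    show (c • x) (2*k+1-n) = _
    simp [lp.coeFn_smul]

lemma reflLM_norm (k : ℤ) (x : ZSeq) : ‖reflLM k x‖ = ‖x‖ := by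
  rw [lp.norm_eq_tsum_rpow (by norm_num) , lp.norm_eq_tsum_rpow (by norm_num)]
  congr 1
  exact (rEquiv k).tsum_eq (fun m : ℤ => ‖x m‖ ^ (2 : ENNReal).toReal)

def reflLI (k : ℤ) : ZSeq →ₗᵢ[ℂ] ZSeq := ⟨reflLM k, reflLM_norm k⟩

def reflCLM (k : ℤ) : ZSeq →L[ℂ] ZSeq := (reflLI k).toContinuousLinearMap

lemma reflCLM_apply (k : ℤ) (x : ZSeq) (n : ℤ) : (reflCLM k x) n = x (2*k+1-n) := rfl

lemma reflCLM_delta (k q : ℤ) : reflCLM k (deltaZ q) = deltaZ (2*k+1-q) := by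
  apply lp.ext; funext n
  rw [reflCLM_apply]
  rcases eq_or_ne n (2*k+1-q) with h | h
  · rw [h]
    have h2 : (2*k+1-(2*k+1-q)) = q := by ring
    rw [h2, deltaZ, deltaZ, lp.single_apply_self, lp.single_apply_self]
  · have h2 : (2*k+1-n) ≠ q := by omega
    rw [deltaZ, deltaZ, lp.single_apply_ne _ _ _ h2, lp.single_apply_ne _ _ _ h]

lemma reflCLM_invol (k : ℤ) (x : ZSeq) : reflCLM k (reflCLM k x) = x := by
  apply lp.ext; funext n
  rw [reflCLM_apply, reflCLM_apply]
  have h : 2*k+1-(2*k+1-n) = n := by ring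
  rw [h]

lemma reflCLM_symm (k : ℤ) (x y : ZSeq) : ⟪reflCLM k x, y⟫ = ⟪x, reflCLM k y⟫ := by
  conv_lhs => rw [← reflCLM_invol k y]
  exact (reflLI k).inner_map_map x (reflCLM k y)



lemma refl_comm (a b : ℤ → ℝ) (H : ZSeq →L[ℂ] ZSeq)
    (hH : ∀ p q : ℤ, ⟪deltaZ p, H (deltaZ q)⟫ =
      if p = q then (b q : ℂ)
      else if p = q + 1 ∨ q = p + 1 then (a (min p q) : ℂ) else 0)
    (k : ℤ) (ha2 : ∀ m : ℤ, a (2*k - m) = a m) (hb2 : ∀ m : ℤ, b (2*k+1-m) = b m) :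
    reflCLM k ∘L H ∘L reflCLM k = H := by
  apply matrix_ext; intro p q
  have e1 : (reflCLM k ∘L H ∘L reflCLM k) (deltaZ q) = reflCLM k (H (deltaZ (2*k+1-q))) := by
    simp [ContinuousLinearMap.comp_apply, reflCLM_delta]
  rw [e1, ← reflCLM_symm, reflCLM_delta, hH, hH]
  by_cases hpq : p = q
  · subst hpq
    rw [if_pos rfl, if_pos rfl, hb2]
  · have hpq' : ¬(2*k+1-p = 2*k+1-q) := by omega
    rw [if_neg hpq', if_neg hpq]
    by_cases hadj : p = q + 1 ∨ q = p + 1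
    · have hadj' : (2*k+1-p = 2*k+1-q+1 ∨ 2*k+1-q = 2*k+1-p+1) := by omega
      rw [if_pos hadj', if_pos hadj]
      have hmin : min (2*k+1-p) (2*k+1-q) = 2*k - min p q := by omega
      rw [hmin, ha2]
    · have hadj' : ¬(2*k+1-p = 2*k+1-q+1 ∨ 2*k+1-q = 2*k+1-p+1) := by omega
      rw [if_neg hadj', if_neg hadj]

lemma diag_refl (H R : ZSeq →L[ℂ] ZSeq) (k : ℤ)
    (hcomm : reflCLM k ∘L H ∘L reflCLM k = H) (z : ℂ)
    (h1 : (H - z • 1) ∘L R = 1) (h2 : R ∘L (H - z • 1) = 1) (p : ℤ) :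
    ⟪deltaZ p, R (deltaZ p)⟫ = ⟪deltaZ (2*k+1-p), R (deltaZ (2*k+1-p))⟫ := by
  set u : ZSeq →L[ℂ] ZSeq := reflCLM k with hu
  have hu2 : u * u = 1 := by
    refine ContinuousLinearMap.ext fun x => ?_
    show u (u x) = x
    exact reflCLM_invol k x
  have hcomm' : u * H * u = H := hcomm
  have huH : u * H = H * u := by
    calc u * H = u * H * (u * u) := by rw [hu2, mul_one]
      _ = (u * H * u) * u := by noncomm_ring
      _ = H * u := by rw [hcomm']
  set K : ZSeq →L[ℂ] ZSeq := H - z • 1 with hK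
  have huK : u * K = K * u := by
    rw [hK, mul_sub, sub_mul, huH, mul_smul_comm, smul_mul_assoc, mul_one, one_mul]
  have h1' : K * R = 1 := h1
  have h2' : R * K = 1 := h2
  have hinv : K * (u * R * u) = 1 := by
    calc K * (u * R * u) = (K * u) * R * u := by noncomm_ring
      _ = (u * K) * R * u := by rw [huK]
      _ = u * (K * R) * u := by noncomm_ring
      _ = u * u := by rw [h1', mul_one]
      _ = 1 := hu2
  have hR : u * R * u = R := by
    calc u * R * u = (R * K) * (u * R * u) := by rw [h2', one_mul]
      _ = R * (K * (u * R * u)) := by noncomm_ring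
      _ = R := by rw [hinv, mul_one]
  calc ⟪deltaZ p, R (deltaZ p)⟫ = ⟪deltaZ p, (u * R * u) (deltaZ p)⟫ := by rw [hR]
    _ = ⟪deltaZ p, u (R (u (deltaZ p)))⟫ := rfl
    _ = ⟪u (deltaZ p), R (u (deltaZ p))⟫ := by rw [reflCLM_symm]
    _ = ⟪deltaZ (2*k+1-p), R (deltaZ (2*k+1-p))⟫ := by rw [hu, reflCLM_delta]


lemma diag1 (b : ℤ → ℝ) (a : ℤ → ℝ) (H : ZSeq →L[ℂ] ZSeq)
    (hH : ∀ p q : ℤ, ⟪deltaZ p, H (deltaZ q)⟫ =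
      if p = q then (b q : ℂ)
      else if p = q + 1 ∨ q = p + 1 then (a (min p q) : ℂ) else 0)
    (p : ℤ) : ⟪deltaZ p, H (deltaZ p)⟫ = (b p : ℂ) := by
  rw [hH p p, if_pos rfl]

lemma diag2 (a b : ℤ → ℝ) (H : ZSeq →L[ℂ] ZSeq) (hSA : IsSelfAdjoint H)
    (hH : ∀ p q : ℤ, ⟪deltaZ p, H (deltaZ q)⟫ =
      if p = q then (b q : ℂ)
      else if p = q + 1 ∨ q = p + 1 then (a (min p q) : ℂ) else 0)
    (p : ℤ) : ⟪deltaZ p, H (H (deltaZ p))⟫ =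
      ((a (p-1))^2 + (b p)^2 + (a p)^2 : ℝ) := by
  have hsym : ⟪deltaZ p, H (H (deltaZ p))⟫ = ⟪H (deltaZ p), H (deltaZ p)⟫ := by
    rw [← ContinuousLinearMap.adjoint_inner_left H (H (deltaZ p)) (deltaZ p), hSA.adjoint_eq]
  have hv : ∀ m : ℤ, (H (deltaZ p)) m = ⟪deltaZ m, H (deltaZ p)⟫ := fun m => (coord _ m).symm
  have hv1 : (H (deltaZ p)) (p-1) = ((a (p-1) : ℝ) : ℂ) := by
    rw [hv, hH, if_neg (by omega), if_pos (by omega), min_eq_left (by omega)]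
  have hv2 : (H (deltaZ p)) p = ((b p : ℝ) : ℂ) := by
    rw [hv, hH, if_pos rfl]
  have hv3 : (H (deltaZ p)) (p+1) = ((a p : ℝ) : ℂ) := by
    rw [hv, hH, if_neg (by omega), if_pos (by omega), min_eq_right (by omega)]
  have hsupp : ∀ m : ℤ, m ∉ ({p-1, p, p+1} : Finset ℤ) →
      (inner ℂ ((H (deltaZ p)) m) ((H (deltaZ p)) m) : ℂ) = 0 := by
    intro m hm
    simp only [Finset.mem_insert, Finset.mem_singleton] at hm
    push_neg at hm
    rw [hv, hH, if_neg (by omega), if_neg (by omega)]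
    simp
  rw [hsym, lp.inner_eq_tsum, tsum_eq_sum hsupp]
  have hne1 : (p : ℤ) - 1 ∉ ({p, p+1} : Finset ℤ) := by
    simp only [Finset.mem_insert, Finset.mem_singleton]; omega
  have hne2 : (p : ℤ) ∉ ({p+1} : Finset ℤ) := by
    simp only [Finset.mem_singleton]; omega
  rw [show ({p-1, p, p+1} : Finset ℤ) = insert (p-1) (insert p {p+1}) from rfl,
    Finset.sum_insert hne1, Finset.sum_insert hne2, Finset.sum_singleton]
  rw [hv1, hv2, hv3]
  simp only [RCLike.inner_apply, Complex.conj_ofReal]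
  push_cast
  ring

lemma ii_to_iii (a b : ℤ → ℝ) (ha : ∀ n, 0 ≤ a n) (H : ZSeq →L[ℂ] ZSeq)
    (hSA : IsSelfAdjoint H)
    (hH : ∀ p q : ℤ, ⟪deltaZ p, H (deltaZ q)⟫ =
      if p = q then (b q : ℂ)
      else if p = q + 1 ∨ q = p + 1 then (a (min p q) : ℂ) else 0)
    (hii : ∀ p q : ℤ,
      ⟪deltaZ p, H (deltaZ p)⟫ = ⟪deltaZ q, H (deltaZ q)⟫ ∧
      ⟪deltaZ p, H (H (deltaZ p))⟫ = ⟪deltaZ q, H (H (deltaZ q))⟫) :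
    ∃ a' c' b' : ℝ, 0 ≤ a' ∧ 0 ≤ c' ∧
      ∀ n : ℤ, a (2 * n) = a' ∧ a (2 * n + 1) = c' ∧ b n = b' := by
  have hb : ∀ p : ℤ, b p = b 0 := by
    intro p
    have := (hii p 0).1
    rw [diag1 b a H hH, diag1 b a H hH] at this
    exact_mod_cast this
  have hsum : ∀ p q : ℤ, a (p-1)^2 + a p^2 = a (q-1)^2 + a q^2 := by
    intro p q
    have := (hii p q).2
    rw [diag2 a b H hSA hH, diag2 a b H hSA hH] at this
    have h2 : (a (p-1))^2 + (b p)^2 + (a p)^2 = (a (q-1))^2 + (b q)^2 + (a q)^2 := by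
      exact_mod_cast this
    have hbq : b p = b q := by rw [hb p, hb q]
    rw [hbq] at h2
    linarith
  have hstep : ∀ n : ℤ, a (n+2) = a n := by
    intro n
    have h := hsum (n+2) (n+1)
    have e1 : (n+2) - 1 = n + 1 := by ring
    have e2 : (n+1) - 1 = n := by ring
    rw [e1, e2] at h
    have hsq : a (n+2)^2 = a n^2 := by linarith
    rw [← Real.sqrt_sq (ha (n+2)), ← Real.sqrt_sq (ha n), hsq]
  have key : ∀ n : ℤ, a (2*n) = a 0 ∧ a (2*n+1) = a 1 := by
    intro n
    induction n using Int.induction_on with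
    | zero => norm_num
    | succ m ih =>
      constructor
      · rw [show (2*((m:ℤ)+1)) = 2*(m:ℤ)+2 by ring, hstep]; exact ih.1
      · rw [show (2*((m:ℤ)+1)+1) = (2*(m:ℤ)+1)+2 by ring, hstep]; exact ih.2
    | pred m ih =>
      constructor
      · have h := hstep (2*(-(m:ℤ)-1))
        rw [show 2*(-(m:ℤ)-1)+2 = 2*(-(m:ℤ)) by ring] at h
        rw [← h]; exact ih.1
      · have h := hstep (2*(-(m:ℤ)-1)+1)
        rw [show 2*(-(m:ℤ)-1)+1+2 = 2*(-(m:ℤ))+1 by ring] at h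
        rw [← h]; exact ih.2
  exact ⟨a 0, a 1, b 0, ha 0, ha 1, fun n => ⟨(key n).1, (key n).2, hb n⟩⟩

lemma aP (a : ℤ → ℝ) (a' c' : ℝ)
    (hc : ∀ n : ℤ, a (2 * n) = a' ∧ a (2 * n + 1) = c') :
    ∀ m : ℤ, a m = if m % 2 = 0 then a' else c' := by
  intro m
  rcases Int.even_or_odd m with ⟨n, hn⟩ | ⟨n, hn⟩
  · rw [if_pos (by omega), show m = 2*n by omega]; exact (hc n).1
  · rw [if_neg (by omega), show m = 2*n+1 by omega]; exact (hc n).2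

lemma iii_to_ii (a b : ℤ → ℝ) (H : ZSeq →L[ℂ] ZSeq) (hSA : IsSelfAdjoint H)
    (hH : ∀ p q : ℤ, ⟪deltaZ p, H (deltaZ q)⟫ =
      if p = q then (b q : ℂ)
      else if p = q + 1 ∨ q = p + 1 then (a (min p q) : ℂ) else 0)
    (hiii : ∃ a' c' b' : ℝ, 0 ≤ a' ∧ 0 ≤ c' ∧
      ∀ n : ℤ, a (2 * n) = a' ∧ a (2 * n + 1) = c' ∧ b n = b') :
    ∀ p q : ℤ,
      ⟪deltaZ p, H (deltaZ p)⟫ = ⟪deltaZ q, H (deltaZ q)⟫ ∧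
      ⟪deltaZ p, H (H (deltaZ p))⟫ = ⟪deltaZ q, H (H (deltaZ q))⟫ := by
  obtain ⟨a', c', b', _, _, hc⟩ := hiii
  have haP := aP a a' c' (fun n => ⟨(hc n).1, (hc n).2.1⟩)
  have hbP : ∀ n : ℤ, b n = b' := fun n => (hc n).2.2
  have hquad : ∀ p : ℤ, (a (p-1))^2 + (b p)^2 + (a p)^2 = a'^2 + b'^2 + c'^2 := by
    intro p
    rw [hbP p, haP (p-1), haP p]
    rcases Int.even_or_odd p with ⟨n, hn⟩ | ⟨n, hn⟩
    · rw [if_neg (show ¬((p-1) % 2 = 0) by omega), if_pos (show p % 2 = 0 by omega)]; ring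
    · rw [if_pos (show (p-1) % 2 = 0 by omega), if_neg (show ¬(p % 2 = 0) by omega)]
  intro p q
  constructor
  · rw [diag1 b a H hH, diag1 b a H hH, hbP p, hbP q]
  · rw [diag2 a b H hSA hH, diag2 a b H hSA hH, hquad p, hquad q]

set_option maxHeartbeats 1000000 in
lemma coeff_bound {M : ℝ} (hM : 1 ≤ M) {c : ℕ → ℂ} (hc : ∀ n, ‖c n‖ ≤ 2 * M ^ n)
    {w : ℂ} (hw : M * ‖w‖ ≤ 1/2) (hw0 : w ≠ 0)
    (hz : ∑' n : ℕ, w ^ n * c n = 0) {k : ℕ} (hlow : ∀ j, j < k → c j = 0) :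
    ‖c k‖ ≤ 4 * M ^ (k + 1) * ‖w‖ := by
  have hw1 : 0 < ‖w‖ := norm_pos_iff.mpr hw0
  set r : ℝ := M * ‖w‖ with hr
  have hr0 : 0 ≤ r := by positivity
  have hrlt : r < 1 := lt_of_le_of_lt hw (by norm_num)
  have hbound : ∀ n : ℕ, ‖w ^ n * c n‖ ≤ 2 * r ^ n := by
    intro n
    rw [norm_mul, norm_pow]
    calc ‖w‖ ^ n * ‖c n‖ ≤ ‖w‖ ^ n * (2 * M ^ n) :=
          mul_le_mul_of_nonneg_left (hc n) (pow_nonneg (norm_nonneg _) n)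
      _ = 2 * r ^ n := by rw [hr, mul_pow]; ring
  have hgeo : Summable (fun n : ℕ => r ^ n) := summable_geometric_of_lt_one hr0 hrlt
  have hfn : Summable (fun n : ℕ => ‖w ^ n * c n‖) :=
    Summable.of_nonneg_of_le (fun n => norm_nonneg _) hbound (hgeo.mul_left 2)
  have hf : Summable (fun n : ℕ => w ^ n * c n) := hfn.of_norm
  have hsplit := Summable.sum_add_tsum_nat_add (f := fun n : ℕ => w ^ n * c n) (k+1) hf
  have hhead : ∑ i ∈ Finset.range (k+1), w ^ i * c i = w ^ k * c k := by
    refine Finset.sum_eq_single_of_mem k (Finset.self_mem_range_succ k) ?_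
    intro j hj hjk
    rw [hlow j (by simp only [Finset.mem_range] at hj; omega), mul_zero]
  have hinv2 : (1 - r)⁻¹ ≤ 2 := by
    have hpos : (0:ℝ) < 1 - r := by linarith
    rw [inv_le_comm₀ hpos (by norm_num)]
    linarith
  have htail : ‖∑' n : ℕ, w ^ (n + (k+1)) * c (n + (k+1))‖ ≤ 2 * r ^ (k+1) * 2 := by
    have hsn : Summable (fun n : ℕ => ‖w ^ (n + (k+1)) * c (n + (k+1))‖) :=
      (summable_nat_add_iff (k+1)).mpr hfn
    calc ‖∑' n : ℕ, w ^ (n + (k+1)) * c (n + (k+1))‖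
        ≤ ∑' n : ℕ, ‖w ^ (n + (k+1)) * c (n + (k+1))‖ := norm_tsum_le_tsum_norm hsn
      _ ≤ ∑' n : ℕ, 2 * r ^ (k+1) * r ^ n := by
          refine Summable.tsum_le_tsum (fun n => ?_) hsn (hgeo.mul_left _)
          calc ‖w ^ (n+(k+1)) * c (n+(k+1))‖ ≤ 2 * r ^ (n + (k+1)) := hbound _
            _ = 2 * r ^ (k+1) * r ^ n := by rw [pow_add]; ring
      _ = 2 * r ^ (k+1) * (1 - r)⁻¹ := by
          rw [tsum_mul_left, tsum_geometric_of_lt_one hr0 hrlt]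
      _ ≤ 2 * r ^ (k+1) * 2 := by
          have : (0:ℝ) ≤ 2 * r ^ (k+1) := by positivity
          exact mul_le_mul_of_nonneg_left hinv2 this
  have hkey : ‖w ^ k * c k‖ ≤ 4 * r ^ (k+1) := by
    have h0 : w ^ k * c k = -∑' n : ℕ, w ^ (n+(k+1)) * c (n+(k+1)) := by
      rw [hz, hhead] at hsplit
      linear_combination hsplit
    rw [h0, norm_neg]
    calc ‖∑' n : ℕ, w ^ (n+(k+1)) * c (n+(k+1))‖ ≤ 2 * r ^ (k+1) * 2 := htail
      _ = 4 * r ^ (k+1) := by ring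
  rw [norm_mul, norm_pow] at hkey
  have hrk : r ^ (k+1) = M ^ (k+1) * ‖w‖ ^ k * ‖w‖ := by
    rw [hr, mul_pow, pow_succ]; ring
  rw [hrk] at hkey
  have hpk : 0 < ‖w‖ ^ k := pow_pos hw1 k
  calc ‖c k‖ = (‖w‖ ^ k * ‖c k‖) / ‖w‖ ^ k := (mul_div_cancel_left₀ _ hpk.ne').symm
    _ ≤ (4 * (M ^ (k+1) * ‖w‖ ^ k * ‖w‖)) / ‖w‖ ^ k := by gcongr
    _ = 4 * M ^ (k+1) * ‖w‖ := by
        rw [show 4 * (M ^ (k+1) * ‖w‖ ^ k * ‖w‖) = (4 * M ^ (k+1) * ‖w‖) * ‖w‖ ^ k by ring,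
          mul_div_cancel_right₀ _ hpk.ne']

lemma resolvent_diag (H : ZSeq →L[ℂ] ZSeq) {z : ℂ} (hz0 : z ≠ 0)
    (hT : ‖z⁻¹ • H‖ < 1) :
    ∃ R : ZSeq →L[ℂ] ZSeq, ((H - z • 1) ∘L R = 1 ∧ R ∘L (H - z • 1) = 1) ∧
      ∀ s : ℤ, ⟪deltaZ s, R (deltaZ s)⟫ =
        (-z)⁻¹ * ∑' n : ℕ, (z⁻¹)^n * ⟪deltaZ s, (H^n) (deltaZ s)⟫ := by
  set T : ZSeq →L[ℂ] ZSeq := z⁻¹ • H with hTdef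
  have hsum : Summable (fun n : ℕ => T ^ n) := summable_geometric_of_norm_lt_one hT
  set S : ZSeq →L[ℂ] ZSeq := ∑' n : ℕ, T ^ n with hS
  have hfact : H - z • (1 : ZSeq →L[ℂ] ZSeq) = (-z) • (1 - T) := by
    rw [smul_sub, hTdef, smul_smul, neg_mul, mul_inv_cancel₀ hz0, neg_smul, neg_smul, one_smul,
      sub_neg_eq_add]
    abel
  have h1 : (H - z • 1) * ((-z)⁻¹ • S) = 1 := by
    rw [hfact, smul_mul_assoc, mul_smul_comm, smul_smul,
      mul_inv_cancel₀ (neg_ne_zero.mpr hz0), one_smul, hS, mul_neg_geom_series T hT]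
  have h2 : ((-z)⁻¹ • S) * (H - z • 1) = 1 := by
    rw [hfact, smul_mul_assoc, mul_smul_comm, smul_smul,
      inv_mul_cancel₀ (neg_ne_zero.mpr hz0), one_smul, hS, geom_series_mul_neg T hT]
  refine ⟨(-z)⁻¹ • S, ⟨h1, h2⟩, ?_⟩
  intro s
  have hSd : HasSum (fun n : ℕ => (T ^ n) (deltaZ s)) (S (deltaZ s)) := by
    have := hsum.hasSum.mapL (ContinuousLinearMap.apply ℂ ZSeq (deltaZ s))
    simpa using this
  have hinner : HasSum (fun n : ℕ => ⟪deltaZ s, (T ^ n) (deltaZ s)⟫)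
      ⟪deltaZ s, S (deltaZ s)⟫ := hSd.mapL (innerSL ℂ (deltaZ s))
  have heq : ∀ n : ℕ, ⟪deltaZ s, (T ^ n) (deltaZ s)⟫
      = (z⁻¹)^n * ⟪deltaZ s, (H^n) (deltaZ s)⟫ := by
    intro n
    rw [hTdef, smul_pow, ContinuousLinearMap.smul_apply, inner_smul_right]
  have happ : (((-z)⁻¹ • S) : ZSeq →L[ℂ] ZSeq) (deltaZ s) = (-z)⁻¹ • (S (deltaZ s)) := rfl
  rw [happ, inner_smul_right, ← hinner.tsum_eq]
  congr 1
  exact tsum_congr heq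

lemma resolvent_to_moments (a b : ℤ → ℝ) (H : ZSeq →L[ℂ] ZSeq) (hSA : IsSelfAdjoint H)
    (hres : ∀ z : ℂ, z.im ≠ 0 → ∀ R : ZSeq →L[ℂ] ZSeq,
        ((H - z • (1 : ZSeq →L[ℂ] ZSeq)) ∘L R = 1 ∧ R ∘L (H - z • 1) = 1) →
        ∀ p q : ℤ, ⟪deltaZ p, R (deltaZ p)⟫ = ⟪deltaZ q, R (deltaZ q)⟫) :
    ∀ p q : ℤ,
      ⟪deltaZ p, H (deltaZ p)⟫ = ⟪deltaZ q, H (deltaZ q)⟫ ∧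
      ⟪deltaZ p, H (H (deltaZ p))⟫ = ⟪deltaZ q, H (H (deltaZ q))⟫ := by
  intro p q
  set M : ℝ := ‖H‖ + 1 with hMdef
  have hM1 : 1 ≤ M := by have := norm_nonneg H; simp only [hMdef]; linarith
  have hdeltanorm : ∀ s : ℤ, ‖deltaZ s‖ = 1 := by
    intro s
    have := lp.norm_single (p := 2) (E := fun _ : ℤ => ℂ) (by norm_num)
      s (1:ℂ)
    simpa [deltaZ] using this
  set m : ℕ → ℤ → ℂ := fun n s => ⟪deltaZ s, (H^n) (deltaZ s)⟫ with hm
  set c : ℕ → ℂ := fun n => m n p - m n q with hcdef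
  have hpow : ∀ n : ℕ, ‖H^n‖ ≤ M^n := by
    intro n
    induction n with
    | zero =>
      simp only [pow_zero]
      calc ‖(1 : ZSeq →L[ℂ] ZSeq)‖ = ‖ContinuousLinearMap.id ℂ ZSeq‖ := rfl
        _ ≤ 1 := ContinuousLinearMap.norm_id_le
    | succ n ih =>
      calc ‖H^(n+1)‖ = ‖H^n * H‖ := by rw [pow_succ]
        _ ≤ ‖H^n‖ * ‖H‖ := norm_mul_le _ _
        _ ≤ M^n * M := by
            have h1 : ‖H‖ ≤ M := by simp only [hMdef]; linarith
            exact mul_le_mul ih h1 (norm_nonneg _) (by positivity)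
        _ = M^(n+1) := by rw [pow_succ]
  have hmb : ∀ (n : ℕ) (s : ℤ), ‖m n s‖ ≤ M ^ n := by
    intro n s
    calc ‖m n s‖ ≤ ‖deltaZ s‖ * ‖(H^n) (deltaZ s)‖ := norm_inner_le_norm _ _
      _ = ‖(H^n) (deltaZ s)‖ := by rw [hdeltanorm, one_mul]
      _ ≤ ‖H^n‖ * ‖deltaZ s‖ := (H^n).le_opNorm _
      _ = ‖H^n‖ := by rw [hdeltanorm, mul_one]
      _ ≤ M^n := hpow n
  have hc : ∀ n, ‖c n‖ ≤ 2 * M^n := by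
    intro n
    calc ‖c n‖ ≤ ‖m n p‖ + ‖m n q‖ := norm_sub_le _ _
      _ ≤ 2 * M^n := by have := hmb n p; have := hmb n q; linarith
  have hc0 : c 0 = 0 := by
    have hone : ∀ s : ℤ, m 0 s = 1 := by
      intro s
      simp only [hm, pow_zero, ContinuousLinearMap.one_apply]
      rw [coord, deltaZ, lp.single_apply_self]
    simp [hcdef, hone]
  have hzero : ∀ t : ℝ, 2*M ≤ t →
      ∑' n : ℕ, ((((t:ℂ)*Complex.I)⁻¹)^n) * c n = 0 := by
    intro t ht
    have htpos : (0:ℝ) < t := by linarith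
    set z : ℂ := (t:ℂ)*Complex.I with hzdef
    have hz0 : z ≠ 0 := mul_ne_zero (Complex.ofReal_ne_zero.mpr htpos.ne') Complex.I_ne_zero
    have hzn : ‖z‖ = t := by
      rw [hzdef, norm_mul, Complex.norm_I, mul_one, Complex.norm_real, Real.norm_eq_abs,
        abs_of_pos htpos]
    have hHlt : ‖H‖ < t := by simp only [hMdef] at ht; linarith
    have hT : ‖z⁻¹ • H‖ < 1 := by
      rw [norm_smul z⁻¹ H, norm_inv, hzn, ← div_eq_inv_mul, div_lt_one htpos]
      exact hHlt
    obtain ⟨R, hRinv, hRdiag⟩ := resolvent_diag H hz0 hT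
    have him : z.im ≠ 0 := by
      rw [hzdef]
      simp [Complex.mul_im]
      exact htpos.ne'
    have hG := hres z him R hRinv p q
    rw [hRdiag p, hRdiag q] at hG
    have hmul := mul_left_cancel₀ (inv_ne_zero (neg_ne_zero.mpr hz0)) hG
    have hr2 : M * ‖(z : ℂ)⁻¹‖ < 1 := by
      rw [norm_inv, hzn]
      rw [← div_eq_mul_inv, div_lt_one htpos]
      linarith
    have hsummand : ∀ s : ℤ, Summable (fun n : ℕ => ((z⁻¹)^n) * m n s) := by
      intro s
      apply Summable.of_norm
      refine Summable.of_nonneg_of_le (fun n => norm_nonneg _) (fun n => ?_)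
        (summable_geometric_of_lt_one (by positivity) hr2)
      rw [norm_mul, norm_pow, mul_pow]
      calc ‖(z:ℂ)⁻¹‖^n * ‖m n s‖ ≤ ‖(z:ℂ)⁻¹‖^n * M^n :=
            mul_le_mul_of_nonneg_left (hmb n s) (by positivity)
        _ = M^n * ‖(z:ℂ)⁻¹‖^n := by ring
  -- rewrite sum of difference
    have : (fun n : ℕ => ((z⁻¹)^n) * c n)
        = fun n : ℕ => ((z⁻¹)^n) * m n p - ((z⁻¹)^n) * m n q := by
      funext n; simp only [hcdef]; ring
    rw [this, Summable.tsum_sub (hsummand p) (hsummand q), hmul, sub_self]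
  have hkb : ∀ (k : ℕ), (∀ j, j < k → c j = 0) → ∀ t : ℝ, 2*M ≤ t →
      ‖c k‖ ≤ 4 * M^(k+1) * t⁻¹ := by
    intro k hlow t ht
    have htpos : (0:ℝ) < t := by linarith
    set z : ℂ := (t:ℂ)*Complex.I with hzdef
    have hz0 : z ≠ 0 := mul_ne_zero (Complex.ofReal_ne_zero.mpr htpos.ne') Complex.I_ne_zero
    have hzn : ‖z‖ = t := by
      rw [hzdef, norm_mul, Complex.norm_I, mul_one, Complex.norm_real, Real.norm_eq_abs,
        abs_of_pos htpos]
    have hwn : ‖(z : ℂ)⁻¹‖ = t⁻¹ := by rw [norm_inv, hzn]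
    have hw : M * ‖(z:ℂ)⁻¹‖ ≤ 1/2 := by
      rw [hwn, ← div_eq_mul_inv, div_le_iff₀ htpos]
      linarith
    have := coeff_bound hM1 hc hw (inv_ne_zero hz0) (hzero t ht) hlow
    rwa [hwn] at this
  have hlim : ∀ (k : ℕ), (∀ j, j < k → c j = 0) → c k = 0 := by
    intro k hlow
    have hten : Tendsto (fun j : ℕ => 4 * M^(k+1) / (j:ℝ)) atTop (𝓝 0) :=
      tendsto_const_div_atTop_nhds_zero_nat _
    have hev : ∀ᶠ j : ℕ in atTop, ‖c k‖ ≤ 4 * M^(k+1) / (j:ℝ) := by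
      filter_upwards [eventually_ge_atTop (⌈2*M⌉₊)] with j hj
      have hge : 2*M ≤ (j:ℝ) := le_trans (Nat.le_ceil _) (by exact_mod_cast hj)
      have := hkb k hlow (j:ℝ) hge
      rwa [← div_eq_mul_inv] at this
    have : ‖c k‖ ≤ 0 := ge_of_tendsto hten hev
    exact norm_le_zero_iff.mp this
  have hC1 : c 1 = 0 := hlim 1 (fun j hj => by obtain rfl := (show j = 0 by omega); exact hc0)
  have hC2 : c 2 = 0 := by
    refine hlim 2 ?_
    intro j hj
    rcases (by omega : j = 0 ∨ j = 1) with h | h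
    · rw [h]; exact hc0
    · rw [h]; exact hC1
  constructor
  · have h := sub_eq_zero.mp hC1
    simpa only [hm, pow_one] using h
  · have h := sub_eq_zero.mp hC2
    have h2 : ∀ s : ℤ, (H^2) (deltaZ s) = H (H (deltaZ s)) := by
      intro s; rw [pow_two, ContinuousLinearMap.mul_apply]
    simp only [hm, h2] at h
    exact h

lemma iii_to_i (a b : ℤ → ℝ) (H : ZSeq →L[ℂ] ZSeq)
    (hH : ∀ p q : ℤ, ⟪deltaZ p, H (deltaZ q)⟫ =
      if p = q then (b q : ℂ)
      else if p = q + 1 ∨ q = p + 1 then (a (min p q) : ℂ) else 0)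
    (hiii : ∃ a' c' b' : ℝ, 0 ≤ a' ∧ 0 ≤ c' ∧
      ∀ n : ℤ, a (2 * n) = a' ∧ a (2 * n + 1) = c' ∧ b n = b') :
    ∀ z : ℂ, z.im ≠ 0 → ∀ R : ZSeq →L[ℂ] ZSeq,
      ((H - z • (1 : ZSeq →L[ℂ] ZSeq)) ∘L R = 1 ∧ R ∘L (H - z • 1) = 1) →
      ∀ p q : ℤ, ⟪deltaZ p, R (deltaZ p)⟫ = ⟪deltaZ q, R (deltaZ q)⟫ := by
  obtain ⟨a', c', b', _, _, hc⟩ := hiii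
  have haP := aP a a' c' (fun n => ⟨(hc n).1, (hc n).2.1⟩)
  have hbP : ∀ n : ℤ, b n = b' := fun n => (hc n).2.2
  intro z hz R hR p q
  have hcomm : ∀ k : ℤ, reflCLM k ∘L H ∘L reflCLM k = H := by
    intro k
    refine refl_comm a b H hH k (fun mm => ?_) (fun mm => ?_)
    · rw [haP, haP]
      have h : (2*k-mm) % 2 = mm % 2 := by omega
      rw [h]
    · rw [hbP, hbP]
  have hstep : ∀ (k r : ℤ), ⟪deltaZ r, R (deltaZ r)⟫
      = ⟪deltaZ (2*k+1-r), R (deltaZ (2*k+1-r))⟫ :=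
    fun k r => diag_refl H R k (hcomm k) z hR.1 hR.2 r
  rcases Int.even_or_odd (p+q) with ⟨n, hn⟩ | ⟨n, hn⟩
  · have h1 := hstep 0 p
    have h2 := hstep ((q-p)/2) (2*0+1-p)
    have he : 2*((q-p)/2)+1-(2*0+1-p) = q := by omega
    rw [he] at h2
    exact h1.trans h2
  · have h1 := hstep n p
    have he : 2*n+1-p = q := by omega
    rw [he] at h1
    exact h1

end S15

theorem statement15
    (a b : ℤ → ℝ) (ha : ∀ n, 0 ≤ a n)
    (hbd : ∃ C : ℝ, ∀ n, a n ≤ C ∧ |b n| ≤ C)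
    (H : ZSeq →L[ℂ] ZSeq) (hSA : IsSelfAdjoint H)
    (hH : ∀ p q : ℤ, inner (𝕜 := ℂ) (deltaZ p) (H (deltaZ q)) =
      if p = q then (b q : ℂ)
      else if p = q + 1 ∨ q = p + 1 then (a (min p q) : ℂ) else 0) :
    ((∀ z : ℂ, z.im ≠ 0 → ∀ R : ZSeq →L[ℂ] ZSeq,
        ((H - z • (1 : ZSeq →L[ℂ] ZSeq)) ∘L R = 1 ∧ R ∘L (H - z • 1) = 1) →
        ∀ p q : ℤ, inner (𝕜 := ℂ) (deltaZ p) (R (deltaZ p)) =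
          inner (𝕜 := ℂ) (deltaZ q) (R (deltaZ q))) ↔
      (∃ a' c' b' : ℝ, 0 ≤ a' ∧ 0 ≤ c' ∧
        ∀ n : ℤ, a (2 * n) = a' ∧ a (2 * n + 1) = c' ∧ b n = b')) ∧
    ((∀ p q : ℤ,
        inner (𝕜 := ℂ) (deltaZ p) (H (deltaZ p)) =
          inner (𝕜 := ℂ) (deltaZ q) (H (deltaZ q)) ∧
        inner (𝕜 := ℂ) (deltaZ p) (H (H (deltaZ p))) =
          inner (𝕜 := ℂ) (deltaZ q) (H (H (deltaZ q)))) ↔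
      (∃ a' c' b' : ℝ, 0 ≤ a' ∧ 0 ≤ c' ∧
        ∀ n : ℤ, a (2 * n) = a' ∧ a (2 * n + 1) = c' ∧ b n = b')) := by
  constructor
  · constructor
    · intro hi
      exact S15.ii_to_iii a b ha H hSA hH (S15.resolvent_to_moments a b H hSA hi)
    · intro hiii
      exact S15.iii_to_i a b H hH hiii
  · constructor
    · intro hii
      exact S15.ii_to_iii a b ha H hSA hH hii
    · intro hiii p q
      exact S15.iii_to_ii a b H hSA hH hiii p q

end
end
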